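/- arXiv:1703.00604 — 4 statements merged into one kernel-verified Lean document; each statement's English description precedes it below -/
import Mathlib

section
/- Let V be a continuous, finitely subadditive capacity on a measurable space (Ω, F) and let {Aₙ, n ≥ 1} be a sequence of events in F. If Σ_{n=1}^∞ V(Aₙ) < ∞, then V(⋂_{n=1}^∞ ⋃_{i=n}^∞ A_i) = 0, i.e. V(limsup_n Aₙ) = 0. -/
open Filter MeasureTheory Set

/-- The class `C_{l,Lip}` of local Lipschitz functions:
`|φ(x) − φ(y)| ≤ C (1 + ‖x‖^m + ‖y‖^m) ‖x − y‖` for some `C > 0` and `m : ℕ`. -/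
def LocLip {α : Type*} [NormedAddCommGroup α] (φ : α → ℝ) : Prop :=
  ∃ C : ℝ, 0 < C ∧ ∃ m : ℕ, ∀ x y : α,
    |φ x - φ y| ≤ C * (1 + ‖x‖ ^ m + ‖y‖ ^ m) * ‖x - y‖

/-- A sublinear expectation space `(Ω, H, Ê)`: `H` is a set of real functions on `Ω`
containing constants, stable under composition with `C_{l,Lip}` functions, and
`E` is monotone, constant preserving, subadditive and positively homogeneous on `H`. -/
structure SubLinExp (Ω : Type*) where
  H : Set (Ω → ℝ)
  E : (Ω → ℝ) → ℝ
  const_mem : ∀ c : ℝ, (fun _ => c) ∈ H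
  comp_mem : ∀ (n : ℕ) (X : Fin n → Ω → ℝ), (∀ i, X i ∈ H) →
    ∀ φ : (Fin n → ℝ) → ℝ, LocLip φ → (fun ω => φ (fun i => X i ω)) ∈ H
  mono : ∀ X ∈ H, ∀ Y ∈ H, (∀ ω, Y ω ≤ X ω) → E Y ≤ E X
  const : ∀ c : ℝ, E (fun _ => c) = c
  subadd : ∀ X ∈ H, ∀ Y ∈ H, E (fun ω => X ω + Y ω) ≤ E X + E Y
  homog : ∀ l : ℝ, 0 ≤ l → ∀ X ∈ H, E (fun ω => l * X ω) = l * E X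

/-- `Y` is independent of the random vector `X = (X₁,…,X_m)`:
`Ê(φ(X,Y)) = Ê(ψ(X))` where `ψ(x) = Ê(φ(x,Y))`, for all `φ ∈ C_{l,Lip}`. -/
def IndepVecOf {Ω : Type*} (S : SubLinExp Ω) {m : ℕ} (Y : Ω → ℝ)
    (X : Fin m → Ω → ℝ) : Prop :=
  ∀ φ : (Fin m → ℝ) → ℝ → ℝ, LocLip (fun q : (Fin m → ℝ) × ℝ => φ q.1 q.2) →
    S.E (fun ω => φ (fun i => X i ω) (Y ω)) =
      S.E (fun ω => S.E (fun ω' => φ (fun i => X i ω) (Y ω')))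

/-- The (1-based) sequence `X₁, X₂, …` is independent:
`X_{i+1}` is independent of `(X₁,…,X_i)` for each `i ≥ 1`. -/
def IndepSeq1 {Ω : Type*} (S : SubLinExp Ω) (X : ℕ → Ω → ℝ) : Prop :=
  ∀ i : ℕ, 1 ≤ i → IndepVecOf S (X (i + 1)) (fun j : Fin i => X ((j : ℕ) + 1))

/-- The (1-based) finite sequence `X₁,…,Xₙ` is independent. -/
def IndepUpTo1 {Ω : Type*} (S : SubLinExp Ω) (X : ℕ → Ω → ℝ) (n : ℕ) : Prop :=
  ∀ i : ℕ, 1 ≤ i → i + 1 ≤ n → IndepVecOf S (X (i + 1)) (fun j : Fin i => X ((j : ℕ) + 1))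

/-- The (1-based) sequence `X₁, X₂, …` is identically distributed. -/
def IdentDist1 {Ω : Type*} (S : SubLinExp Ω) (X : ℕ → Ω → ℝ) : Prop :=
  ∀ i : ℕ, 1 ≤ i → ∀ φ : ℝ → ℝ, LocLip φ →
    S.E (fun ω => φ (X i ω)) = S.E (fun ω => φ (X 1 ω))

/-- A capacity `V` is continuous: `V(Aₙ) ↑ V(A)` if `Aₙ ↑ A` and `V(Aₙ) ↓ V(A)` if `Aₙ ↓ A`. -/
def ContCapacity {Ω : Type*} (V : Set Ω → ℝ) : Prop :=
  (∀ A : ℕ → Set Ω, Monotone A →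
    Tendsto (fun n => V (A n)) atTop (nhds (V (⋃ n, A n)))) ∧
  (∀ A : ℕ → Set Ω, Antitone A →
    Tendsto (fun n => V (A n)) atTop (nhds (V (⋂ n, A n))))

/-- The upper capacity generated by a sublinear expectation: `V(A) = Ê(1_A)`. -/
noncomputable def genV {Ω : Type*} (S : SubLinExp Ω) : Set Ω → ℝ :=
  fun A => S.E (A.indicator fun _ => (1 : ℝ))

/-- The Choquet integral `C_V(Z) = ∫₀^∞ V(Z ≥ t) dt` of a nonnegative random variable. -/
noncomputable def choquet {Ω : Type*} (V : Set Ω → ℝ) (Z : Ω → ℝ) : ENNReal :=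
  ∫⁻ t in Set.Ioi (0 : ℝ), ENNReal.ofReal (V {ω | t ≤ Z ω})

/-- The sublinear expectation `Ê` is regular: `Ê(Xₙ) ↓ 0` whenever `Xₙ(ω) ↓ 0` for every `ω`. -/
def Regular {Ω : Type*} (S : SubLinExp Ω) : Prop :=
  ∀ X : ℕ → Ω → ℝ, (∀ n, X n ∈ S.H) → (∀ ω, Antitone fun n => X n ω) →
    (∀ ω, Tendsto (fun n => X n ω) atTop (nhds 0)) →
    Tendsto (fun n => S.E (X n)) atTop (nhds 0)

/-- Borel–Cantelli lemma for a continuous, finitely subadditive capacity: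
if `Σₙ V(Aₙ) < ∞` then `V(limsup Aₙ) = 0`. -/
theorem borel_cantelli_capacity {Ω : Type*} (V : Set Ω → ℝ)
    (hrange : ∀ A : Set Ω, 0 ≤ V A ∧ V A ≤ 1)
    (hempty : V ∅ = 0) (huniv : V Set.univ = 1)
    (hmono : ∀ A B : Set Ω, A ⊆ B → V A ≤ V B)
    (hsubadd : ∀ A B : Set Ω, V (A ∪ B) ≤ V A + V B)
    (hcont : ContCapacity V)
    (A : ℕ → Set Ω) (hsum : Summable fun n => V (A n)) :
    V (⋂ n, ⋃ i, ⋃ _ : n ≤ i, A i) = 0 := by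
  set B : ℕ → Set Ω := fun n => ⋃ i, ⋃ _ : n ≤ i, A i with hB
  have hBanti : Antitone B := by
    intro m n hmn
    exact Set.iUnion₂_mono' fun i hi => ⟨i, hmn.trans hi, subset_rfl⟩
  have hVB : ∀ n, V (B n) ≤ ∑' k, V (A (k + n)) := by
    intro n
    set C : ℕ → Set Ω := fun k => ⋃ i, ⋃ _ : i < k, A (i + n) with hC
    have hCmono : Monotone C := by
      intro a b hab
      exact Set.iUnion₂_mono' fun i hi => ⟨i, lt_of_lt_of_le hi hab, subset_rfl⟩
    have hCU : (⋃ k, C k) = B n := by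
      ext x
      simp only [hC, hB, Set.mem_iUnion]
      constructor
      · rintro ⟨k, i, hi, hx⟩
        exact ⟨i + n, Nat.le_add_left n i, hx⟩
      · rintro ⟨i, hi, hx⟩
        exact ⟨i - n + 1, i - n, Nat.lt_succ_self _, by rwa [Nat.sub_add_cancel hi]⟩
    have hVC : ∀ k, V (C k) ≤ ∑ i ∈ Finset.range k, V (A (i + n)) := by
      intro k
      induction k with
      | zero => simp [hC, hempty]
      | succ k ih =>
        have hsplit : C (k + 1) = C k ∪ A (k + n) := by
          ext x
          simp only [hC, Set.mem_iUnion, Set.mem_union]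
          constructor
          · rintro ⟨i, hi, hx⟩
            rcases lt_or_eq_of_le (Nat.lt_succ_iff.mp hi) with h | h
            · exact Or.inl ⟨i, h, hx⟩
            · exact Or.inr (h ▸ hx)
          · rintro (⟨i, hi, hx⟩ | hx)
            · exact ⟨i, hi.trans (Nat.lt_succ_self _), hx⟩
            · exact ⟨k, Nat.lt_succ_self _, hx⟩
        rw [hsplit, Finset.sum_range_succ]
        exact (hsubadd _ _).trans (add_le_add ih le_rfl)
    have hsumtail : Summable fun k => V (A (k + n)) :=
      (summable_nat_add_iff n).mpr hsum
    have hVClim : Tendsto (fun k => V (C k)) atTop (nhds (V (B n))) := by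
      rw [← hCU]; exact hcont.1 C hCmono
    refine le_of_tendsto hVClim (Filter.Eventually.of_forall fun k => ?_)
    exact (hVC k).trans (Summable.sum_le_tsum _ (fun i _ => (hrange _).1) hsumtail)
  have htail : Tendsto (fun n => ∑' k, V (A (k + n))) atTop (nhds 0) :=
    tendsto_sum_nat_add (fun n => V (A n))
  have hlim : Tendsto (fun n => V (B n)) atTop (nhds (V (⋂ n, B n))) :=
    hcont.2 B hBanti
  have h1 : V (⋂ n, B n) ≤ 0 :=
    le_of_tendsto_of_tendsto' hlim htail hVB
  exact le_antisymm h1 (hrange _).1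
end

section
/- Let (Ω, H, Ê) be a sublinear expectation space with Ê regular, indicators of events lying in H, and V(A) := Ê(1_A) the capacity generated by Ê. If {ξₙ} ⊂ H is a Cauchy sequence in capacity (for every ε > 0, V(|ξₙ − ξ_m| ≥ ε) → 0 as n, m → ∞), then there exists a subsequence {ξ_{n_k}} and a random variable ξ such that ξ_{n_k} → ξ almost surely with respect to V, i.e. V({ω : ξ_{n_k}(ω) does not converge to ξ(ω)}) = 0. -/
open Filter MeasureTheory Set

open Filter Set

section Aux
variable {Ω : Type*}

lemma locLip_add2 : LocLip (fun q : Fin 2 → ℝ => q 0 + q 1) := by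
  refine ⟨1, one_pos, 0, fun x y => ?_⟩
  have h0 : |x 0 - y 0| ≤ ‖x - y‖ := by
    simpa [Real.norm_eq_abs] using norm_le_pi_norm (x - y) 0
  have h1 : |x 1 - y 1| ≤ ‖x - y‖ := by
    simpa [Real.norm_eq_abs] using norm_le_pi_norm (x - y) 1
  have : |x 0 + x 1 - (y 0 + y 1)| ≤ |x 0 - y 0| + |x 1 - y 1| := by
    have := abs_add_le (x 0 - y 0) (x 1 - y 1); rw [show x 0 + x 1 - (y 0 + y 1) = (x 0 - y 0) + (x 1 - y 1) by ring]; exact this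
  nlinarith [abs_nonneg (x 0 - y 0), norm_nonneg (x - y)]

lemma locLip_sub2 : LocLip (fun q : Fin 2 → ℝ => q 0 - q 1) := by
  refine ⟨1, one_pos, 0, fun x y => ?_⟩
  have h0 : |x 0 - y 0| ≤ ‖x - y‖ := by
    simpa [Real.norm_eq_abs] using norm_le_pi_norm (x - y) 0
  have h1 : |x 1 - y 1| ≤ ‖x - y‖ := by
    simpa [Real.norm_eq_abs] using norm_le_pi_norm (x - y) 1
  have : |x 0 - x 1 - (y 0 - y 1)| ≤ |x 0 - y 0| + |x 1 - y 1| := by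
    have := abs_add_le (x 0 - y 0) (-(x 1 - y 1)); rw [abs_neg] at this; rw [show x 0 - x 1 - (y 0 - y 1) = (x 0 - y 0) + -(x 1 - y 1) by ring]; exact this
  nlinarith [abs_nonneg (x 0 - y 0), norm_nonneg (x - y)]

lemma mem_add (S : SubLinExp Ω) {f g : Ω → ℝ} (hf : f ∈ S.H) (hg : g ∈ S.H) :
    (fun ω => f ω + g ω) ∈ S.H := by
  have := S.comp_mem 2 ![f, g] (by
    intro i; fin_cases i <;> simpa) (fun q => q 0 + q 1) locLip_add2
  simpa using this

lemma mem_sub (S : SubLinExp Ω) {f g : Ω → ℝ} (hf : f ∈ S.H) (hg : g ∈ S.H) :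
    (fun ω => f ω - g ω) ∈ S.H := by
  have := S.comp_mem 2 ![f, g] (by
    intro i; fin_cases i <;> simpa) (fun q => q 0 - q 1) locLip_sub2
  simpa using this

lemma V_mono (S : SubLinExp Ω) (hind : ∀ A : Set Ω, (A.indicator fun _ => (1 : ℝ)) ∈ S.H)
    {A B : Set Ω} (h : A ⊆ B) : genV S A ≤ genV S B := by
  refine S.mono _ (hind B) _ (hind A) fun ω => ?_
  exact Set.indicator_le_indicator_of_subset h (fun _ => zero_le_one) ω

lemma V_empty (S : SubLinExp Ω) : genV S (∅ : Set Ω) = 0 := by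
  have : ((∅ : Set Ω).indicator fun _ => (1 : ℝ)) = fun _ => (0 : ℝ) := by
    ext ω; simp
  rw [genV, this, S.const]

lemma V_union (S : SubLinExp Ω) (hind : ∀ A : Set Ω, (A.indicator fun _ => (1 : ℝ)) ∈ S.H)
    (A B : Set Ω) : genV S (A ∪ B) ≤ genV S A + genV S B := by
  have h1 : genV S (A ∪ B) ≤ S.E (fun ω => (A.indicator fun _ => (1:ℝ)) ω + (B.indicator fun _ => (1:ℝ)) ω) := by
    refine S.mono _ (mem_add S (hind A) (hind B)) _ (hind (A ∪ B)) fun ω => ?_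
    by_cases hA : ω ∈ A <;> by_cases hB : ω ∈ B <;>
      simp [Set.indicator_apply, hA, hB]
  exact h1.trans (S.subadd _ (hind A) _ (hind B))

lemma V_finUnion (S : SubLinExp Ω) (hind : ∀ A : Set Ω, (A.indicator fun _ => (1 : ℝ)) ∈ S.H)
    (A : ℕ → Set Ω) : ∀ M : ℕ,
    genV S (⋃ j ∈ Finset.range M, A j) ≤ ∑ j ∈ Finset.range M, genV S (A j) := by
  intro M
  induction M with
  | zero => simp [V_empty S]
  | succ M ih =>
    have hset : (⋃ j ∈ Finset.range (M+1), A j) = (⋃ j ∈ Finset.range M, A j) ∪ A M := by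
      simp [Finset.range_add_one, Set.union_comm]
    rw [hset, Finset.sum_range_succ]
    exact (V_union S hind _ _).trans (by linarith)

lemma V_iUnion_le (S : SubLinExp Ω) (hreg : Regular S)
    (hind : ∀ A : Set Ω, (A.indicator fun _ => (1 : ℝ)) ∈ S.H)
    (A : ℕ → Set Ω) (c : ℝ)
    (hc : ∀ M : ℕ, genV S (⋃ j ∈ Finset.range M, A j) ≤ c) :
    genV S (⋃ j, A j) ≤ c := by
  set U : Set Ω := ⋃ j, A j with hU
  set UM : ℕ → Set Ω := fun M => ⋃ j ∈ Finset.range M, A j with hUM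
  set Y : ℕ → Ω → ℝ := fun M ω =>
    (U.indicator fun _ => (1:ℝ)) ω - ((UM M).indicator fun _ => (1:ℝ)) ω with hY
  have hUMU : ∀ M, UM M ⊆ U := by
    intro M ω hω
    simp only [hUM, Set.mem_iUnion] at hω
    obtain ⟨j, _, hj⟩ := hω
    exact Set.mem_iUnion.2 ⟨j, hj⟩
  have hYmem : ∀ M, Y M ∈ S.H := fun M => mem_sub S (hind U) (hind (UM M))
  have hmonoUM : ∀ {M M' : ℕ}, M ≤ M' → UM M ⊆ UM M' := by
    intro M M' h ω hω
    simp only [hUM, Set.mem_iUnion, Finset.mem_range] at hω ⊢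
    obtain ⟨j, hj, hj2⟩ := hω
    exact ⟨j, lt_of_lt_of_le hj h, hj2⟩
  have hanti : ∀ ω, Antitone fun M => Y M ω := by
    intro ω M M' h
    simp only [hY]
    have : ((UM M).indicator fun _ => (1:ℝ)) ω ≤ ((UM M').indicator fun _ => (1:ℝ)) ω :=
      Set.indicator_le_indicator_of_subset (hmonoUM h) (fun _ => zero_le_one) ω
    linarith
  have htend : ∀ ω, Tendsto (fun M => Y M ω) atTop (nhds 0) := by
    intro ω
    by_cases hω : ω ∈ U
    · obtain ⟨j, hj⟩ := Set.mem_iUnion.1 hω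
      have hev : ∀ M ≥ j + 1, Y M ω = 0 := by
        intro M hM
        have hin : ω ∈ UM M := by
          simp only [hUM, Set.mem_iUnion, Finset.mem_range]
          exact ⟨j, hM, hj⟩
        simp [hY, Set.indicator_of_mem hω, Set.indicator_of_mem hin]
      exact tendsto_const_nhds.congr' (eventually_atTop.2 ⟨j+1, fun M hM => (hev M hM).symm⟩)
    · have : ∀ M, Y M ω = 0 := by
        intro M
        have hnin : ω ∉ UM M := fun h => hω (hUMU M h)
        simp [hY, Set.indicator_of_notMem hω, Set.indicator_of_notMem hnin]
      simpa [this] using tendsto_const_nhds (α := ℝ) (f := atTop (α := ℕ))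
  have hreg' := hreg Y hYmem hanti htend
  have key : ∀ M, genV S U ≤ c + S.E (Y M) := by
    intro M
    have heq : (U.indicator fun _ => (1:ℝ)) =
        fun ω => ((UM M).indicator fun _ => (1:ℝ)) ω + Y M ω := by
      ext ω; simp [hY]
    have := S.subadd _ (hind (UM M)) _ (hYmem M)
    calc genV S U = S.E (fun ω => ((UM M).indicator fun _ => (1:ℝ)) ω + Y M ω) := by
          rw [genV, heq]
      _ ≤ genV S (UM M) + S.E (Y M) := this
      _ ≤ c + S.E (Y M) := by linarith [hc M]
  have : Tendsto (fun M => c + S.E (Y M)) atTop (nhds (c + 0)) :=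
    tendsto_const_nhds.add hreg'
  have := ge_of_tendsto' (by simpa using this) key
  linarith

end Aux
/-- If `Ê` is regular and `{ξₙ}` is Cauchy in capacity, then some subsequence
`ξ_{n_k}` converges almost surely (w.r.t. `V`) to some random variable `ξ`. -/
theorem cauchy_in_capacity_subseq_converges {Ω : Type*} (S : SubLinExp Ω)
    (hreg : Regular S)
    (hind : ∀ A : Set Ω, (A.indicator fun _ => (1 : ℝ)) ∈ S.H)
    (ξ : ℕ → Ω → ℝ) (hξ : ∀ n, ξ n ∈ S.H)
    (hcauchy : ∀ ε : ℝ, 0 < ε → ∀ δ : ℝ, 0 < δ → ∃ N : ℕ, ∀ m ≥ N, ∀ n ≥ N,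
      genV S {ω | ε ≤ |ξ n ω - ξ m ω|} < δ) :
    ∃ φ : ℕ → ℕ, StrictMono φ ∧ ∃ ξ' : Ω → ℝ,
      genV S {ω | ¬ Tendsto (fun k => ξ (φ k) ω) atTop (nhds (ξ' ω))} = 0 := by
  have hhalf : ∀ k : ℕ, (0:ℝ) < (1/2)^k := fun k => pow_pos (by norm_num) k
  have hexists : ∀ k : ℕ, ∃ N : ℕ, ∀ m ≥ N, ∀ n ≥ N,
      genV S {ω | (1/2)^k ≤ |ξ n ω - ξ m ω|} < (1/2)^k :=
    fun k => hcauchy _ (hhalf k) _ (hhalf k)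
  choose N hN using hexists
  -- the subsequence
  let φ : ℕ → ℕ := fun k => Nat.rec (N 0) (fun k ih => max (N (k+1)) (ih + 1)) k
  have hφsucc : ∀ k, φ (k+1) = max (N (k+1)) (φ k + 1) := fun k => rfl
  have hφmono : StrictMono φ := strictMono_nat_of_lt_succ (by
    intro k; rw [hφsucc]; exact lt_of_lt_of_le (Nat.lt_succ_self _) (le_max_right _ _))
  have hφN : ∀ k, N k ≤ φ k := by
    intro k; cases k with
    | zero => exact le_refl _
    | succ k => rw [hφsucc]; exact le_max_left _ _
  -- bad events
  set A : ℕ → Set Ω := fun k => {ω | (1/2)^k ≤ |ξ (φ (k+1)) ω - ξ (φ k) ω|} with hA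
  have hVA : ∀ k, genV S (A k) < (1/2)^k := by
    intro k
    exact hN k (φ k) (hφN k) (φ (k+1)) (le_trans (hφN k) (hφmono (Nat.lt_succ_self k)).le)
  -- the limit
  set ξ' : Ω → ℝ := fun ω => limUnder atTop (fun k => ξ (φ k) ω) with hξ'
  refine ⟨φ, hφmono, ξ', ?_⟩
  set Bad : Set Ω := {ω | ¬ Tendsto (fun k => ξ (φ k) ω) atTop (nhds (ξ' ω))} with hBad
  -- Bad ⊆ tail unions
  have hsub : ∀ K : ℕ, Bad ⊆ ⋃ j, A (K + j) := by
    intro K ω hω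
    by_contra hωn
    apply hω
    have hlt : ∀ j : ℕ, |ξ (φ (K + j + 1)) ω - ξ (φ (K + j)) ω| < (1/2)^(K+j) := by
      intro j
      by_contra h
      exact hωn (Set.mem_iUnion.2 ⟨j, le_of_not_gt h⟩)
    have hCauchy : CauchySeq (fun k => ξ (φ k) ω) := by
      apply cauchySeq_of_summable_dist
      rw [← summable_nat_add_iff K]
      refine Summable.of_nonneg_of_le (fun j => dist_nonneg) (fun j => ?_)
        (((summable_geometric_of_lt_one (by norm_num) (by norm_num : (1/2:ℝ) < 1)).mul_left
          ((1/2)^K)).congr (fun j => by rw [← pow_add]))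
      have := (hlt j).le
      rw [Real.dist_eq, abs_sub_comm]
      rw [Nat.add_comm j K]
      exact this
    obtain ⟨a, ha⟩ := cauchySeq_tendsto_of_complete hCauchy
    have : ξ' ω = a := ha.limUnder_eq
    rw [this]; exact ha
  -- capacity bound
  have hbound : ∀ K : ℕ, genV S Bad ≤ 2 * (1/2)^K := by
    intro K
    refine (V_mono S hind (hsub K)).trans ?_
    refine V_iUnion_le S hreg hind (fun j => A (K + j)) _ (fun M => ?_)
    calc genV S (⋃ j ∈ Finset.range M, A (K + j))
        ≤ ∑ j ∈ Finset.range M, genV S (A (K + j)) := V_finUnion S hind _ M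
      _ ≤ ∑ j ∈ Finset.range M, (1/2:ℝ)^(K+j) :=
          Finset.sum_le_sum (fun j _ => (hVA (K + j)).le)
      _ = (1/2)^K * ∑ j ∈ Finset.range M, (1/2:ℝ)^j := by
          rw [Finset.mul_sum]; exact Finset.sum_congr rfl (fun j _ => pow_add _ _ _)
      _ ≤ (1/2)^K * 2 := by
          have := sum_geometric_two_le M
          nlinarith [hhalf K]
      _ = 2 * (1/2)^K := by ring
  have h0 : (0:ℝ) ≤ genV S Bad := by
    have := V_mono S hind (Set.empty_subset Bad)
    rwa [V_empty S] at this
  have hle0 : genV S Bad ≤ 0 := by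
    have htend : Tendsto (fun K : ℕ => 2 * (1/2:ℝ)^K) atTop (nhds 0) := by
      have := (tendsto_pow_atTop_nhds_zero_of_lt_one (by norm_num : (0:ℝ) ≤ 1/2)
        (by norm_num : (1/2:ℝ) < 1)).const_mul 2
      simpa using this
    exact le_of_tendsto_of_tendsto' tendsto_const_nhds htend hbound
  exact le_antisymm hle0 h0
end

section
/- (Convergence of random series.) Let {X_i} be a sequence of independent random variables in a sublinear expectation space (Ω, H, Ê) with Ê regular, indicators of events lying in H, and V(A) := Ê(1_A) the continuous capacity generated by Ê. If Ê(X_i) = ε̂(X_i) = 0 for every i and Σ_{i=1}^∞ Ê(X_i²) < ∞, then the series Σ_{i=1}^∞ X_i converges almost surely with respect to V, i.e. V({ω : Σ_{i=1}^n X_i(ω) does not converge as n → ∞}) = 0. -/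
open Filter MeasureTheory Set

namespace RSAux

lemma pow_le_one_add_pow {a : ℝ} (ha : 0 ≤ a) {m M : ℕ} (h : m ≤ M) : a ^ m ≤ 1 + a ^ M := by
  rcases le_total a 1 with h1 | h1
  · have h2 : a ^ m ≤ 1 := pow_le_one₀ ha h1
    have h3 : (0:ℝ) ≤ a ^ M := pow_nonneg ha M
    linarith
  · have : a ^ m ≤ a ^ M := pow_le_pow_right₀ h1 h
    linarith

lemma locLip_combo {α : Type*} [NormedAddCommGroup α] {φ ψ : α → ℝ}
    (hφ : LocLip φ) (hψ : LocLip ψ) (a b d : ℝ) :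
    LocLip (fun x => a * φ x + b * ψ x + d) := by
  obtain ⟨C1, hC1, m1, h1⟩ := hφ
  obtain ⟨C2, hC2, m2, h2⟩ := hψ
  refine ⟨3 * (|a| * C1 + |b| * C2) + 1, by positivity, max m1 m2, fun x y => ?_⟩
  set M := max m1 m2
  have hx : (0:ℝ) ≤ ‖x‖ := norm_nonneg _
  have hy : (0:ℝ) ≤ ‖y‖ := norm_nonneg _
  have hxy : (0:ℝ) ≤ ‖x - y‖ := norm_nonneg _
  have e1 : (1 + ‖x‖ ^ m1 + ‖y‖ ^ m1) ≤ 3 * (1 + ‖x‖ ^ M + ‖y‖ ^ M) := by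
    have := pow_le_one_add_pow hx (le_max_left m1 m2)
    have := pow_le_one_add_pow hy (le_max_left m1 m2)
    have : (0:ℝ) ≤ ‖x‖ ^ M := pow_nonneg hx M
    have : (0:ℝ) ≤ ‖y‖ ^ M := pow_nonneg hy M
    nlinarith [pow_le_one_add_pow hx (le_max_left m1 m2), pow_le_one_add_pow hy (le_max_left m1 m2)]
  have e2 : (1 + ‖x‖ ^ m2 + ‖y‖ ^ m2) ≤ 3 * (1 + ‖x‖ ^ M + ‖y‖ ^ M) := by
    nlinarith [pow_le_one_add_pow hx (le_max_right m1 m2), pow_le_one_add_pow hy (le_max_right m1 m2),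
      pow_nonneg hx M, pow_nonneg hy M]
  have key : |a * φ x + b * ψ x + d - (a * φ y + b * ψ y + d)| ≤
      |a| * |φ x - φ y| + |b| * |ψ x - ψ y| := by
    have : a * φ x + b * ψ x + d - (a * φ y + b * ψ y + d) = a * (φ x - φ y) + b * (ψ x - ψ y) := by
      ring
    rw [this]
    calc |a * (φ x - φ y) + b * (ψ x - ψ y)| ≤ |a * (φ x - φ y)| + |b * (ψ x - ψ y)| := abs_add_le _ _
    _ = |a| * |φ x - φ y| + |b| * |ψ x - ψ y| := by rw [abs_mul, abs_mul]
  have b1 : |a| * |φ x - φ y| ≤ |a| * (C1 * (1 + ‖x‖ ^ m1 + ‖y‖ ^ m1) * ‖x - y‖) :=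
    mul_le_mul_of_nonneg_left (h1 x y) (abs_nonneg a)
  have b2 : |b| * |ψ x - ψ y| ≤ |b| * (C2 * (1 + ‖x‖ ^ m2 + ‖y‖ ^ m2) * ‖x - y‖) :=
    mul_le_mul_of_nonneg_left (h2 x y) (abs_nonneg b)
  have hM : (0:ℝ) ≤ 1 + ‖x‖ ^ M + ‖y‖ ^ M := by positivity
  calc |a * φ x + b * ψ x + d - (a * φ y + b * ψ y + d)|
      ≤ |a| * (C1 * (1 + ‖x‖ ^ m1 + ‖y‖ ^ m1) * ‖x - y‖)
        + |b| * (C2 * (1 + ‖x‖ ^ m2 + ‖y‖ ^ m2) * ‖x - y‖) := by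
        exact le_trans key (add_le_add b1 b2)
    _ ≤ (3 * (|a| * C1 + |b| * C2) + 1) * (1 + ‖x‖ ^ M + ‖y‖ ^ M) * ‖x - y‖ := by
        nlinarith [mul_le_mul_of_nonneg_left e1 (mul_nonneg (abs_nonneg a) (le_of_lt hC1)),
          mul_le_mul_of_nonneg_left e2 (mul_nonneg (abs_nonneg b) (le_of_lt hC2)),
          mul_nonneg (mul_nonneg (mul_nonneg (abs_nonneg a) (le_of_lt hC1)) hM) hxy,
          mul_nonneg (mul_nonneg (mul_nonneg (abs_nonneg b) (le_of_lt hC2)) hM) hxy]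

lemma locLip_const {α : Type*} [NormedAddCommGroup α] (c : ℝ) : LocLip (fun _ : α => c) :=
  ⟨1, one_pos, 0, fun x y => by simp [norm_nonneg]; positivity⟩

lemma locLip_comp_lip {α β : Type*} [NormedAddCommGroup α] [NormedAddCommGroup β]
    {g : β → ℝ} (hg : LocLip g) {F : α → β} {K : ℝ} (hK : 0 ≤ K)
    (hF : ∀ x y, ‖F x - F y‖ ≤ K * ‖x - y‖) (hF0 : F 0 = 0) :
    LocLip (fun x => g (F x)) := by
  obtain ⟨C, hC, m, h⟩ := hg
  refine ⟨C * K * (1 + K ^ m) + 1, by positivity, m, fun x y => ?_⟩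
  have hFx : ‖F x‖ ≤ K * ‖x‖ := by simpa [hF0] using hF x 0
  have hFy : ‖F y‖ ≤ K * ‖y‖ := by simpa [hF0] using hF y 0
  have hx : (0:ℝ) ≤ ‖x‖ := norm_nonneg _
  have hy : (0:ℝ) ≤ ‖y‖ := norm_nonneg _
  have hxy : (0:ℝ) ≤ ‖x - y‖ := norm_nonneg _
  have p1 : ‖F x‖ ^ m ≤ K ^ m * ‖x‖ ^ m := by
    rw [← mul_pow]; exact pow_le_pow_left₀ (norm_nonneg _) hFx m
  have p2 : ‖F y‖ ^ m ≤ K ^ m * ‖y‖ ^ m := by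
    rw [← mul_pow]; exact pow_le_pow_left₀ (norm_nonneg _) hFy m
  have hb := h (F x) (F y)
  have hKm : (0:ℝ) ≤ K ^ m := pow_nonneg hK m
  have step : |g (F x) - g (F y)| ≤ C * (1 + K ^ m * ‖x‖ ^ m + K ^ m * ‖y‖ ^ m) * (K * ‖x - y‖) := by
    have h2 : ‖F x - F y‖ ≤ K * ‖x - y‖ := hF x y
    have hg1 : (0:ℝ) ≤ 1 + ‖F x‖ ^ m + ‖F y‖ ^ m := by positivity
    calc |g (F x) - g (F y)| ≤ C * (1 + ‖F x‖ ^ m + ‖F y‖ ^ m) * ‖F x - F y‖ := hb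
      _ ≤ C * (1 + K ^ m * ‖x‖ ^ m + K ^ m * ‖y‖ ^ m) * (K * ‖x - y‖) := by
          apply mul_le_mul
          · apply mul_le_mul_of_nonneg_left _ (le_of_lt hC); linarith
          · exact h2
          · exact norm_nonneg _
          · positivity
  refine le_trans step ?_
  have e : (1 + K ^ m * ‖x‖ ^ m + K ^ m * ‖y‖ ^ m) ≤ (1 + K ^ m) * (1 + ‖x‖ ^ m + ‖y‖ ^ m) := by
    nlinarith [pow_nonneg hx m, pow_nonneg hy m]
  have h1m : (0:ℝ) ≤ 1 + ‖x‖ ^ m + ‖y‖ ^ m := by positivity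
  nlinarith [mul_nonneg h1m hxy, mul_nonneg (mul_nonneg (le_of_lt hC) hK) (mul_nonneg h1m hxy),
    mul_le_mul_of_nonneg_left e (mul_nonneg (mul_nonneg (le_of_lt hC) hK) hxy)]

lemma locLip_sq : LocLip (fun t : ℝ => t ^ 2) := by
  refine ⟨1, one_pos, 1, fun x y => ?_⟩
  have : x ^ 2 - y ^ 2 = (x + y) * (x - y) := by ring
  rw [this, abs_mul]
  simp only [Real.norm_eq_abs, pow_one]
  have : |x + y| ≤ 1 + |x| + |y| := by
    have := abs_add_le x y; have := abs_nonneg x; linarith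
  apply mul_le_mul_of_nonneg_right _ (abs_nonneg _)
  linarith

lemma locLip_id : LocLip (fun t : ℝ => t) := by
  refine ⟨1, one_pos, 0, fun x y => ?_⟩
  simp only [Real.norm_eq_abs, pow_zero]
  nlinarith [abs_nonneg (x - y)]

lemma locLip_quad (a b d : ℝ) : LocLip (fun t : ℝ => a * t ^ 2 + b * t + d) :=
  locLip_combo locLip_sq locLip_id a b d

noncomputable def chi (e t : ℝ) : ℝ := min 1 (max 0 ((2 * t - e) / e))

noncomputable def Phi (e m s : ℝ) : ℝ := (1 - chi e m) * s ^ 2 + chi e m * (e / 2) ^ 2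

lemma chi_nonneg (e t : ℝ) : 0 ≤ chi e t := le_min zero_le_one (le_max_left _ _)

lemma chi_le_one (e t : ℝ) : chi e t ≤ 1 := min_le_left _ _

lemma chi_mono {e : ℝ} (he : 0 < e) {t t' : ℝ} (h : t ≤ t') : chi e t ≤ chi e t' := by
  unfold chi
  apply min_le_min le_rfl
  apply max_le_max le_rfl
  apply div_le_div_of_nonneg_right (by linarith) he.le

lemma chi_eq_zero {e t : ℝ} (he : 0 < e) (h : t ≤ e / 2) : chi e t = 0 := by
  unfold chi
  have h1 : (2 * t - e) / e ≤ 0 := div_nonpos_of_nonpos_of_nonneg (by linarith) he.le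
  rw [max_eq_left h1, min_eq_right zero_le_one]

lemma chi_eq_one {e t : ℝ} (he : 0 < e) (h : e ≤ t) : chi e t = 1 := by
  unfold chi
  have h1 : (1:ℝ) ≤ (2 * t - e) / e := by
    rw [le_div_iff₀ he]; linarith
  rw [max_eq_right (by linarith), min_eq_left h1]

lemma chi_pos_gt {e t : ℝ} (he : 0 < e) (h : 0 < chi e t) : e / 2 < t := by
  by_contra hc
  push_neg at hc
  rw [chi_eq_zero he hc] at h
  exact lt_irrefl 0 h

lemma abs_min_one_sub_min_one (x y : ℝ) : |min 1 x - min 1 y| ≤ |x - y| := by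
  rcases le_total x y with h | h
  · rw [abs_of_nonpos (by simp [min_le_min le_rfl h] : min 1 x - min 1 y ≤ 0),
      abs_of_nonpos (by linarith)]
    rcases le_total x 1 with h1 | h1
    · have : min 1 x = x := min_eq_right h1
      have h2 : min 1 y ≤ y := min_le_right _ _
      rw [this]; linarith
    · have : min 1 x = 1 := min_eq_left h1
      have : min 1 y = 1 := min_eq_left (by linarith)
      simp_all
  · rw [abs_of_nonneg (by simp [min_le_min le_rfl h] : 0 ≤ min 1 x - min 1 y),
      abs_of_nonneg (by linarith)]
    rcases le_total y 1 with h1 | h1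
    · have : min 1 y = y := min_eq_right h1
      have h2 : min 1 x ≤ x := min_le_right _ _
      rw [this]; linarith
    · have : min 1 y = 1 := min_eq_left h1
      have : min 1 x = 1 := min_eq_left (by linarith)
      simp_all

lemma chi_lip {e : ℝ} (he : 0 < e) (a b : ℝ) : |chi e a - chi e b| ≤ 2 / e * |a - b| := by
  unfold chi
  have h1 : |min 1 (max 0 ((2*a - e)/e)) - min 1 (max 0 ((2*b - e)/e))| ≤
      |max 0 ((2*a - e)/e) - max 0 ((2*b - e)/e)| := abs_min_one_sub_min_one _ _
  have h2 : |max 0 ((2*a - e)/e) - max 0 ((2*b - e)/e)| ≤ |(2*a - e)/e - (2*b - e)/e| := by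
    have := abs_max_sub_max_le_max (0:ℝ) ((2*a - e)/e) 0 ((2*b - e)/e)
    simpa using this
  have h3 : |(2*a - e)/e - (2*b - e)/e| = 2 / e * |a - b| := by
    have : (2*a - e)/e - (2*b - e)/e = 2 / e * (a - b) := by field_simp; ring
    rw [this, abs_mul, abs_of_nonneg (by positivity : (0:ℝ) ≤ 2 / e)]
  calc |min 1 (max 0 ((2*a - e)/e)) - min 1 (max 0 ((2*b - e)/e))|
      ≤ |max 0 ((2*a - e)/e) - max 0 ((2*b - e)/e)| := h1
    _ ≤ |(2*a - e)/e - (2*b - e)/e| := h2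
    _ = 2 / e * |a - b| := h3

lemma Phi_nonneg {e : ℝ} (m s : ℝ) : 0 ≤ Phi e m s := by
  unfold Phi
  have h1 := chi_nonneg e m
  have h2 := chi_le_one e m
  nlinarith [sq_nonneg s, sq_nonneg (e/2)]

lemma Phi_zero_zero {e : ℝ} (he : 0 < e) : Phi e 0 0 = 0 := by
  unfold Phi
  rw [chi_eq_zero he (by positivity)]
  ring

lemma Phi_of_ge {e m s : ℝ} (he : 0 < e) (h : e ≤ m) : Phi e m s = (e / 2) ^ 2 := by
  unfold Phi
  rw [chi_eq_one he h]
  ring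

/-- The key pointwise supermartingale-type inequality: updating the running max
can only decrease `Phi`. -/
lemma Phi_max_le {e : ℝ} (he : 0 < e) (m s : ℝ) (hm : 0 ≤ m) :
    Phi e (max m |s|) s ≤ Phi e m s := by
  rcases le_total |s| m with h | h
  · rw [max_eq_left h]
  · rw [max_eq_right h]
    unfold Phi
    have hmono : chi e m ≤ chi e |s| := chi_mono he h
    rcases le_or_gt (e/2) |s| with h2 | h2
    · have hs2 : (e/2)^2 ≤ s^2 := by
        have : (e/2)^2 ≤ |s|^2 := pow_le_pow_left₀ (by positivity) h2 2
        simpa [sq_abs] using this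
      nlinarith
    · have h0 : chi e |s| = 0 := chi_eq_zero he h2.le
      have : chi e m = 0 := le_antisymm (h0 ▸ hmono) (chi_nonneg e m)
      rw [h0, this]

/-- The algebraic identity used in the one-step expectation computation. -/
lemma Phi_shift (e m s y : ℝ) :
    Phi e m (s + y) = (1 - chi e m) * (s + y) ^ 2 + chi e m * (e / 2) ^ 2 := rfl

set_option maxHeartbeats 1000000 in
/-- The master `LocLip` lemma: `Phi` composed with Lipschitz maps vanishing at `0`. -/
lemma locLip_Phi {E : Type*} [NormedAddCommGroup E] {e K : ℝ} (he : 0 < e) (hK : 0 ≤ K)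
    {A B : E → ℝ} (hA0 : A 0 = 0) (hB0 : B 0 = 0)
    (hA : ∀ x y, |A x - A y| ≤ K * ‖x - y‖) (hB : ∀ x y, |B x - B y| ≤ K * ‖x - y‖) :
    LocLip (fun x => Phi e (A x) (B x)) := by
  refine ⟨2 * K^2 + 2 * K^3 * (2/e) + K * e / 2 + 1, by positivity, 2, fun x y => ?_⟩
  have hx : (0:ℝ) ≤ ‖x‖ := norm_nonneg _
  have hy : (0:ℝ) ≤ ‖y‖ := norm_nonneg _
  have hD : (0:ℝ) ≤ ‖x - y‖ := norm_nonneg _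
  have hBx : |B x| ≤ K * ‖x‖ := by simpa [hB0] using hB x 0
  have hBy : |B y| ≤ K * ‖y‖ := by simpa [hB0] using hB y 0
  have hBd : |B x - B y| ≤ K * ‖x - y‖ := hB x y
  have hAd : |A x - A y| ≤ K * ‖x - y‖ := hA x y
  -- decompose the difference
  have decomp : Phi e (A x) (B x) - Phi e (A y) (B y) =
      (1 - chi e (A x)) * ((B x)^2 - (B y)^2)
      + (chi e (A y) - chi e (A x)) * ((B y)^2 - (e/2)^2) := by
    unfold Phi; ring
  have c1 : |1 - chi e (A x)| ≤ 1 := by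
    have := chi_nonneg e (A x); have := chi_le_one e (A x)
    rw [abs_le]; constructor <;> linarith
  have c2 : |(B x)^2 - (B y)^2| ≤ (|B x| + |B y|) * |B x - B y| := by
    have : (B x)^2 - (B y)^2 = (B x + B y) * (B x - B y) := by ring
    rw [this, abs_mul]
    exact mul_le_mul_of_nonneg_right (abs_add_le _ _) (abs_nonneg _)
  have c3 : |chi e (A y) - chi e (A x)| ≤ 2/e * |A x - A y| := by
    rw [abs_sub_comm]; exact chi_lip he _ _
  have c4 : |(B y)^2 - (e/2)^2| ≤ (B y)^2 + (e/2)^2 := by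
    have h1 : (0:ℝ) ≤ (B y)^2 := sq_nonneg _
    have h2 : (0:ℝ) ≤ (e/2)^2 := sq_nonneg _
    rw [abs_le]; constructor <;> linarith
  have main : |Phi e (A x) (B x) - Phi e (A y) (B y)| ≤
      (|B x| + |B y|) * |B x - B y| + (2/e * |A x - A y|) * ((B y)^2 + (e/2)^2) := by
    rw [decomp]
    calc |(1 - chi e (A x)) * ((B x)^2 - (B y)^2)
        + (chi e (A y) - chi e (A x)) * ((B y)^2 - (e/2)^2)|
        ≤ |(1 - chi e (A x))| * |(B x)^2 - (B y)^2|
          + |chi e (A y) - chi e (A x)| * |(B y)^2 - (e/2)^2| := by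
          refine le_trans (abs_add_le _ _) ?_
          rw [abs_mul, abs_mul]
      _ ≤ (|B x| + |B y|) * |B x - B y| + (2/e * |A x - A y|) * ((B y)^2 + (e/2)^2) := by
          have t1 : |(1 - chi e (A x))| * |(B x)^2 - (B y)^2| ≤ 1 * ((|B x| + |B y|) * |B x - B y|) :=
            mul_le_mul c1 c2 (abs_nonneg _) zero_le_one
          have t2 : |chi e (A y) - chi e (A x)| * |(B y)^2 - (e/2)^2| ≤
              (2/e * |A x - A y|) * ((B y)^2 + (e/2)^2) :=
            mul_le_mul c3 c4 (abs_nonneg _) (by positivity)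
          linarith
  refine le_trans main ?_
  -- now the polynomial bound
  have q1 : (|B x| + |B y|) * |B x - B y| ≤ (K * ‖x‖ + K * ‖y‖) * (K * ‖x - y‖) := by
    apply mul_le_mul (add_le_add hBx hBy) hBd (abs_nonneg _)
    positivity
  have q2 : (2/e * |A x - A y|) * ((B y)^2 + (e/2)^2) ≤
      (2/e * (K * ‖x - y‖)) * ((K * ‖y‖)^2 + (e/2)^2) := by
    apply mul_le_mul
    · exact mul_le_mul_of_nonneg_left hAd (by positivity)
    · have : (B y)^2 ≤ (K * ‖y‖)^2 := by
        rw [← sq_abs (B y)]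
        exact pow_le_pow_left₀ (abs_nonneg _) hBy 2
      linarith
    · positivity
    · positivity
  have expand : (K * ‖x‖ + K * ‖y‖) * (K * ‖x - y‖) + (2/e * (K * ‖x - y‖)) * ((K * ‖y‖)^2 + (e/2)^2)
      ≤ (2 * K^2 + 2 * K^3 * (2/e) + K * e / 2 + 1) * (1 + ‖x‖^2 + ‖y‖^2) * ‖x - y‖ := by
    have n1 : ‖x‖ ≤ 1 + ‖x‖^2 := by nlinarith [sq_nonneg (‖x‖ - 1)]
    have n2 : ‖y‖ ≤ 1 + ‖y‖^2 := by nlinarith [sq_nonneg (‖y‖ - 1)]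
    have hsq : (0:ℝ) ≤ ‖x‖^2 := sq_nonneg _
    have hsq' : (0:ℝ) ≤ ‖y‖^2 := sq_nonneg _
    have hQ : (0:ℝ) ≤ 1 + ‖x‖^2 + ‖y‖^2 := by positivity
    have eq : (K * ‖x‖ + K * ‖y‖) * (K * ‖x - y‖) + (2/e * (K * ‖x - y‖)) * ((K * ‖y‖)^2 + (e/2)^2)
        = (K^2 * (‖x‖ + ‖y‖) + 2/e * K^3 * ‖y‖^2 + K * e / 2) * ‖x - y‖ := by
      field_simp
      ring
    rw [eq]
    apply mul_le_mul_of_nonneg_right _ hD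
    have key1 : K^2 * (‖x‖ + ‖y‖) ≤ 2 * K^2 * (1 + ‖x‖^2 + ‖y‖^2) := by
      nlinarith [mul_le_mul_of_nonneg_left n1 (sq_nonneg K), mul_le_mul_of_nonneg_left n2 (sq_nonneg K),
        mul_nonneg (sq_nonneg K) hsq, mul_nonneg (sq_nonneg K) hsq']
    have hc2 : (0:ℝ) ≤ 2/e * K^3 := by positivity
    have key2 : 2/e * K^3 * ‖y‖^2 ≤ 2/e * K^3 * (1 + ‖x‖^2 + ‖y‖^2) := by
      apply mul_le_mul_of_nonneg_left _ hc2
      linarith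
    have hc3 : (0:ℝ) ≤ K * e / 2 := by positivity
    have key3 : K * e / 2 ≤ K * e / 2 * (1 + ‖x‖^2 + ‖y‖^2) := by
      nlinarith
    have hrest : 2/e * K^3 * (1 + ‖x‖^2 + ‖y‖^2) ≤ 2 * K^3 * (2/e) * (1 + ‖x‖^2 + ‖y‖^2) := by
      apply mul_le_mul_of_nonneg_right _ hQ
      have : (0:ℝ) ≤ K^3 * (2/e) := by positivity
      linarith
    have final : K^2 * (‖x‖ + ‖y‖) + 2/e * K^3 * ‖y‖^2 + K * e / 2
        ≤ 2 * K^2 * (1 + ‖x‖^2 + ‖y‖^2) + 2 * K^3 * (2/e) * (1 + ‖x‖^2 + ‖y‖^2)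
          + K * e / 2 * (1 + ‖x‖^2 + ‖y‖^2) + (1 + ‖x‖^2 + ‖y‖^2) := by
      linarith
    calc K^2 * (‖x‖ + ‖y‖) + 2/e * K^3 * ‖y‖^2 + K * e / 2
        ≤ 2 * K^2 * (1 + ‖x‖^2 + ‖y‖^2) + 2 * K^3 * (2/e) * (1 + ‖x‖^2 + ‖y‖^2)
          + K * e / 2 * (1 + ‖x‖^2 + ‖y‖^2) + (1 + ‖x‖^2 + ‖y‖^2) := final
      _ = (2 * K^2 + 2 * K^3 * (2/e) + K * e / 2 + 1) * (1 + ‖x‖^2 + ‖y‖^2) := by ring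
  linarith


section Tuples

/-- Partial sum `x_m + ... + x_{j-1}` of a finite tuple (out-of-range indices count as 0). -/
def tSp (m j : ℕ) {n : ℕ} (x : Fin n → ℝ) : ℝ :=
  ∑ i ∈ Finset.Ico m j, if h : i < n then x ⟨i, h⟩ else 0

/-- Running maximum of absolute partial sums of a finite tuple. -/
noncomputable def tMp (m j : ℕ) {n : ℕ} (x : Fin n → ℝ) : ℝ :=
  (Finset.Icc m j).fold max 0 (fun r => |tSp m r x|)

variable {Ω : Type*}

/-- Partial sum `X_{m+1} + ... + X_j` (1-based). -/
def Sp (X : ℕ → Ω → ℝ) (m j : ℕ) (ω : Ω) : ℝ := ∑ i ∈ Finset.Ico m j, X (i + 1) ω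

/-- Running maximum `max_{m ≤ r ≤ j} |S_r - S_m|`. -/
noncomputable def Mp (X : ℕ → Ω → ℝ) (m j : ℕ) (ω : Ω) : ℝ :=
  (Finset.Icc m j).fold max 0 (fun r => |Sp X m r ω|)

lemma tSp_eq (X : ℕ → Ω → ℝ) (m j : ℕ) {n : ℕ} (h : j ≤ n) (ω : Ω) :
    tSp m j (fun t : Fin n => X ((t : ℕ) + 1) ω) = Sp X m j ω := by
  unfold tSp Sp
  refine Finset.sum_congr rfl fun i hi => ?_
  have hin : i < n := lt_of_lt_of_le (Finset.mem_Ico.mp hi).2 h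
  rw [dif_pos hin]

lemma tMp_eq (X : ℕ → Ω → ℝ) (m j : ℕ) {n : ℕ} (h : j ≤ n) (ω : Ω) :
    tMp m j (fun t : Fin n => X ((t : ℕ) + 1) ω) = Mp X m j ω := by
  unfold tMp Mp
  refine Finset.fold_congr fun r hr => ?_
  rw [tSp_eq X m r (le_trans (Finset.mem_Icc.mp hr).2 h) ω]

lemma tSp_zero (m j : ℕ) {n : ℕ} : tSp m j (0 : Fin n → ℝ) = 0 := by
  unfold tSp
  refine Finset.sum_eq_zero fun i _ => ?_
  split <;> simp

lemma tSp_lip (m j : ℕ) {n : ℕ} (x y : Fin n → ℝ) :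
    |tSp m j x - tSp m j y| ≤ (j : ℝ) * ‖x - y‖ := by
  unfold tSp
  rw [← Finset.sum_sub_distrib]
  refine le_trans (Finset.abs_sum_le_sum_abs _ _) ?_
  have hb : ∀ i ∈ Finset.Ico m j,
      |(if h : i < n then x ⟨i, h⟩ else 0) - (if h : i < n then y ⟨i, h⟩ else 0)| ≤ ‖x - y‖ := by
    intro i _
    split
    · rename_i h
      have := norm_le_pi_norm (x - y) ⟨i, h⟩
      simpa [Real.norm_eq_abs] using this
    · simp
  refine le_trans (Finset.sum_le_sum hb) ?_
  rw [Finset.sum_const, nsmul_eq_mul]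
  have hcard : ((Finset.Ico m j).card : ℝ) ≤ (j : ℝ) := by
    rw [Nat.card_Ico]
    exact_mod_cast Nat.sub_le j m
  exact mul_le_mul_of_nonneg_right hcard (norm_nonneg _)

lemma fold_max_zero_lip {s : Finset ℕ} {f g : ℕ → ℝ} {K : ℝ} (hK : 0 ≤ K)
    (h : ∀ r ∈ s, |f r - g r| ≤ K) :
    |s.fold max 0 f - s.fold max 0 g| ≤ K := by
  classical
  induction s using Finset.induction_on with
  | empty => simpa using hK
  | insert _ _ hnot ih =>
    rename_i a s
    rw [Finset.fold_insert hnot, Finset.fold_insert hnot]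
    refine le_trans (abs_max_sub_max_le_max _ _ _ _) ?_
    refine max_le (h a (Finset.mem_insert_self a s)) (ih fun r hr => h r (Finset.mem_insert_of_mem hr))

lemma fold_max_zero_of {s : Finset ℕ} {f : ℕ → ℝ} (h : ∀ r ∈ s, f r = 0) :
    s.fold max 0 f = 0 := by
  classical
  induction s using Finset.induction_on with
  | empty => rfl
  | insert _ _ hnot ih =>
    rename_i a s
    rw [Finset.fold_insert hnot, h a (Finset.mem_insert_self a s),
      ih fun r hr => h r (Finset.mem_insert_of_mem hr)]
    simp

lemma tMp_zero (m j : ℕ) {n : ℕ} : tMp m j (0 : Fin n → ℝ) = 0 := by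
  unfold tMp
  exact fold_max_zero_of fun r _ => by rw [tSp_zero]; simp

lemma tMp_lip (m j : ℕ) {n : ℕ} (x y : Fin n → ℝ) :
    |tMp m j x - tMp m j y| ≤ (j : ℝ) * ‖x - y‖ := by
  unfold tMp
  refine fold_max_zero_lip (by positivity) fun r hr => ?_
  refine le_trans (abs_abs_sub_abs_le_abs_sub _ _) ?_
  refine le_trans (tSp_lip m r x y) ?_
  have : (r : ℝ) ≤ (j : ℝ) := by exact_mod_cast (Finset.mem_Icc.mp hr).2
  exact mul_le_mul_of_nonneg_right this (norm_nonneg _)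

lemma Sp_self (X : ℕ → Ω → ℝ) (m : ℕ) (ω : Ω) : Sp X m m ω = 0 := by
  unfold Sp; simp

lemma Sp_succ (X : ℕ → Ω → ℝ) {m k : ℕ} (h : m ≤ k) (ω : Ω) :
    Sp X m (k + 1) ω = Sp X m k ω + X (k + 1) ω := by
  unfold Sp
  rw [Finset.sum_Ico_succ_top h]

lemma Mp_self (X : ℕ → Ω → ℝ) (m : ℕ) (ω : Ω) : Mp X m m ω = 0 := by
  unfold Mp
  rw [Finset.Icc_self, Finset.fold_singleton, Sp_self]
  simp

lemma Mp_succ (X : ℕ → Ω → ℝ) {m k : ℕ} (h : m ≤ k) (ω : Ω) :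
    Mp X m (k + 1) ω = max (Mp X m k ω) |Sp X m (k + 1) ω| := by
  unfold Mp
  rw [← Finset.insert_Icc_right_eq_Icc_add_one (le_trans h (Nat.le_succ k)),
    Finset.fold_insert (by simp), max_comm]

lemma Mp_nonneg (X : ℕ → Ω → ℝ) (m j : ℕ) (ω : Ω) : 0 ≤ Mp X m j ω :=
  (Finset.le_fold_max 0).mpr (Or.inl le_rfl)

lemma Mp_ge_iff (X : ℕ → Ω → ℝ) (m j : ℕ) (ω : Ω) {c : ℝ} (hc : 0 < c) :
    c ≤ Mp X m j ω ↔ ∃ r, (m ≤ r ∧ r ≤ j) ∧ c ≤ |Sp X m r ω| := by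
  unfold Mp
  rw [Finset.le_fold_max]
  constructor
  · rintro (h | ⟨r, hr, hcr⟩)
    · linarith
    · exact ⟨r, Finset.mem_Icc.mp hr, hcr⟩
  · rintro ⟨r, hr, hcr⟩
    exact Or.inr ⟨r, Finset.mem_Icc.mpr hr, hcr⟩

end Tuples

section SLE

variable {Ω : Type*} (S : SubLinExp Ω)

lemma locLip_affine (a b : ℝ) : LocLip (fun t : ℝ => a * t + b) := by
  refine ⟨|a| + 1, by positivity, 0, fun x y => ?_⟩
  have : a * x + b - (a * y + b) = a * (x - y) := by ring
  rw [this, abs_mul]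
  simp only [Real.norm_eq_abs, pow_zero]
  nlinarith [abs_nonneg (x - y), abs_nonneg a]

lemma Hmem_comp1 {f : Ω → ℝ} (hf : f ∈ S.H) {g : ℝ → ℝ} (hg : LocLip g) :
    (fun ω => g (f ω)) ∈ S.H := by
  have key := S.comp_mem 1 (fun _ => f) (fun _ => hf) (fun v => g (v 0)) ?_
  · exact key
  · refine locLip_comp_lip hg (K := 1) zero_le_one (fun x y => ?_) rfl
    have := norm_le_pi_norm (x - y) 0
    simpa using this

lemma Hmem_smul {f : Ω → ℝ} (hf : f ∈ S.H) (a : ℝ) : (fun ω => a * f ω) ∈ S.H := by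
  have := Hmem_comp1 S hf (locLip_affine a 0)
  simpa only [add_zero] using this

lemma Hmem_add_const {f : Ω → ℝ} (hf : f ∈ S.H) (b : ℝ) : (fun ω => f ω + b) ∈ S.H := by
  have := Hmem_comp1 S hf (locLip_affine 1 b)
  simpa only [one_mul] using this

lemma E_add_const {f : Ω → ℝ} (hf : f ∈ S.H) (c : ℝ) :
    S.E (fun ω => f ω + c) = S.E f + c := by
  have hfc : (fun ω => f ω + c) ∈ S.H := Hmem_add_const S hf c
  apply le_antisymm
  · have h1 : S.E (fun ω => f ω + c) ≤ S.E f + S.E (fun _ => c) :=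
      S.subadd f hf (fun _ => c) (S.const_mem c)
    rw [S.const] at h1
    exact h1
  · have h2 : S.E (fun ω => (f ω + c) + (-c)) ≤ S.E (fun ω => f ω + c) + S.E (fun _ => (-c)) :=
      S.subadd _ hfc (fun _ => (-c)) (S.const_mem (-c))
    rw [S.const] at h2
    have h3 : (fun ω => (f ω + c) + (-c)) = f := by funext ω; ring
    rw [h3] at h2
    linarith

lemma E_nonneg_of {f : Ω → ℝ} (hf : f ∈ S.H) (h : ∀ ω, 0 ≤ f ω) : 0 ≤ S.E f := by
  have := S.mono f hf (fun _ => (0:ℝ)) (S.const_mem 0) h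
  rw [S.const] at this
  exact this

lemma genV_nonneg (hind : ∀ A : Set Ω, (A.indicator fun _ => (1:ℝ)) ∈ S.H) (A : Set Ω) :
    0 ≤ genV S A :=
  E_nonneg_of S (hind A) fun ω => Set.indicator_nonneg (fun _ _ => zero_le_one) ω

lemma genV_mono (hind : ∀ A : Set Ω, (A.indicator fun _ => (1:ℝ)) ∈ S.H)
    {A B : Set Ω} (h : A ⊆ B) : genV S A ≤ genV S B := by
  refine S.mono _ (hind B) _ (hind A) fun ω => ?_
  by_cases hA : ω ∈ A
  · rw [Set.indicator_of_mem hA, Set.indicator_of_mem (h hA)]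
  · rw [Set.indicator_of_notMem hA]
    exact Set.indicator_nonneg (fun _ _ => zero_le_one) ω

variable (X : ℕ → Ω → ℝ)

lemma E_smul_zero {Y : Ω → ℝ} (hY : Y ∈ S.H)
    (h1 : S.E Y = 0) (h2 : S.E (fun ω => -Y ω) = 0) (a : ℝ) :
    S.E (fun ω => a * Y ω) = 0 := by
  rcases le_total 0 a with ha | ha
  · rw [S.homog a ha Y hY, h1, mul_zero]
  · have hnY : (fun ω => -Y ω) ∈ S.H := by
      have := Hmem_smul S hY (-1)
      simpa only [neg_one_mul] using this
    have key : S.E (fun ω => (-a) * (-Y ω)) = (-a) * S.E (fun ω => -Y ω) :=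
      S.homog (-a) (by linarith) _ hnY
    have h3 : (fun ω => (-a) * (-Y ω)) = (fun ω => a * Y ω) := by funext ω; ring
    rw [h3] at key
    rw [key, h2, mul_zero]

lemma E_sq_shift {Y : Ω → ℝ} (hY : Y ∈ S.H)
    (h1 : S.E Y = 0) (h2 : S.E (fun ω => -Y ω) = 0) (s : ℝ) :
    S.E (fun ω => (s + Y ω) ^ 2) = s ^ 2 + S.E (fun ω => (Y ω) ^ 2) := by
  have hsq : (fun ω => (Y ω) ^ 2) ∈ S.H := by
    have := Hmem_comp1 S hY locLip_sq
    exact this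
  have hlin : (fun ω => 2 * s * Y ω) ∈ S.H := Hmem_smul S hY (2 * s)
  have hlin' : (fun ω => -(2 * s) * Y ω) ∈ S.H := Hmem_smul S hY (-(2 * s))
  have hEq : S.E (fun ω => 2 * s * Y ω) = 0 := E_smul_zero S hY h1 h2 (2 * s)
  have hEq' : S.E (fun ω => -(2 * s) * Y ω) = 0 := E_smul_zero S hY h1 h2 (-(2 * s))
  have hsum : (fun ω => 2 * s * Y ω + (Y ω) ^ 2) ∈ S.H := by
    have hq := Hmem_comp1 S hY (locLip_quad 1 (2 * s) 0)
    have e : (fun ω => 1 * (Y ω) ^ 2 + 2 * s * Y ω + 0) = (fun ω => 2 * s * Y ω + (Y ω) ^ 2) := by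
      funext ω; ring
    rwa [e] at hq
  have hshift : (fun ω => (s + Y ω) ^ 2) ∈ S.H := by
    have hq := Hmem_comp1 S hY (locLip_quad 1 (2 * s) (s ^ 2))
    have e : (fun ω => 1 * (Y ω) ^ 2 + 2 * s * Y ω + s ^ 2) = (fun ω => (s + Y ω) ^ 2) := by
      funext ω; ring
    rwa [e] at hq
  apply le_antisymm
  · have e1 : (fun ω => (s + Y ω) ^ 2) = (fun ω => (2 * s * Y ω + (Y ω) ^ 2) + s ^ 2) := by
      funext ω; ring
    rw [e1, E_add_const S hsum (s ^ 2)]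
    have h4 : S.E (fun ω => 2 * s * Y ω + (Y ω) ^ 2) ≤
        S.E (fun ω => 2 * s * Y ω) + S.E (fun ω => (Y ω) ^ 2) :=
      S.subadd _ hlin _ hsq
    rw [hEq] at h4
    linarith
  · have hsum2 : (fun ω => (Y ω) ^ 2 + s ^ 2) ∈ S.H := Hmem_add_const S hsq (s ^ 2)
    have h5 : S.E (fun ω => (Y ω) ^ 2 + s ^ 2) ≤
        S.E (fun ω => (s + Y ω) ^ 2) + S.E (fun ω => -(2 * s) * Y ω) := by
      have e2 : (fun ω => (Y ω) ^ 2 + s ^ 2) =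
          (fun ω => (s + Y ω) ^ 2 + (-(2 * s) * Y ω)) := by
        funext ω; ring
      rw [e2]
      exact S.subadd _ hshift _ hlin'
    rw [hEq', E_add_const S hsq (s ^ 2)] at h5
    linarith

lemma E_phi_step {Y : Ω → ℝ} (hY : Y ∈ S.H)
    (h1 : S.E Y = 0) (h2 : S.E (fun ω => -Y ω) = 0) {e : ℝ} (he : 0 < e) (m0 s : ℝ) :
    S.E (fun ω => Phi e m0 (s + Y ω)) =
      Phi e m0 s + (1 - chi e m0) * S.E (fun ω => (Y ω) ^ 2) := by
  have hc0 := chi_nonneg e m0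
  have hc1 := chi_le_one e m0
  have hsq : (fun ω => (s + Y ω) ^ 2) ∈ S.H := by
    have hq := Hmem_comp1 S hY (locLip_quad 1 (2 * s) (s ^ 2))
    have e2 : (fun ω => 1 * (Y ω) ^ 2 + 2 * s * Y ω + s ^ 2) = (fun ω => (s + Y ω) ^ 2) := by
      funext ω; ring
    rwa [e2] at hq
  have hmul : (fun ω => (1 - chi e m0) * (s + Y ω) ^ 2) ∈ S.H := by
    have hq := Hmem_comp1 S hY (locLip_quad (1 - chi e m0) ((1 - chi e m0) * (2 * s))
      ((1 - chi e m0) * s ^ 2))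
    have e2 : (fun ω => (1 - chi e m0) * (Y ω) ^ 2 + (1 - chi e m0) * (2 * s) * Y ω
        + (1 - chi e m0) * s ^ 2) = (fun ω => (1 - chi e m0) * (s + Y ω) ^ 2) := by
      funext ω; ring
    rwa [e2] at hq
  have e1 : (fun ω => Phi e m0 (s + Y ω)) =
      (fun ω => (1 - chi e m0) * (s + Y ω) ^ 2 + chi e m0 * (e / 2) ^ 2) := by
    funext ω; rfl
  rw [e1, E_add_const S hmul (chi e m0 * (e / 2) ^ 2)]
  have e3 : S.E (fun ω => (1 - chi e m0) * (s + Y ω) ^ 2) =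
      (1 - chi e m0) * S.E (fun ω => (s + Y ω) ^ 2) :=
    S.homog (1 - chi e m0) (by linarith) _ hsq
  rw [e3, E_sq_shift S hY h1 h2 s]
  unfold Phi
  ring

lemma Hmem_Phi (hX : ∀ i, X i ∈ S.H) {e : ℝ} (he : 0 < e) (m j : ℕ) :
    (fun ω => Phi e (Mp X m j ω) (Sp X m j ω)) ∈ S.H := by
  have hphi : LocLip (fun x : Fin j → ℝ => Phi e (tMp m j x) (tSp m j x)) :=
    locLip_Phi he (K := (j : ℝ)) (Nat.cast_nonneg j) (tMp_zero m j) (tSp_zero m j)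
      (fun x y => tMp_lip m j x y) (fun x y => tSp_lip m j x y)
  have key := S.comp_mem j (fun t : Fin j => X ((t : ℕ) + 1)) (fun t => hX _) _ hphi
  have e1 : (fun ω => Phi e (tMp m j (fun t : Fin j => X ((t : ℕ) + 1) ω))
      (tSp m j (fun t : Fin j => X ((t : ℕ) + 1) ω))) =
      (fun ω => Phi e (Mp X m j ω) (Sp X m j ω)) := by
    funext ω
    rw [tMp_eq X m j le_rfl ω, tSp_eq X m j le_rfl ω]
  rwa [e1] at key

end SLE


section Kolmogorov

variable {Ω : Type*} (S : SubLinExp Ω) (X : ℕ → Ω → ℝ)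

set_option maxHeartbeats 1000000 in
/-- Kolmogorov-type bound: `Ê Φ(M_{m,n}, S_n - S_m) ≤ ∑_{i=m+1}^n Ê(X_i²)`. -/
lemma EPhi_bound (hX : ∀ i, X i ∈ S.H) (hindep : IndepSeq1 S X)
    (hmean : ∀ i, 1 ≤ i → S.E (X i) = 0 ∧ S.E (fun ω => -X i ω) = 0)
    {e : ℝ} (he : 0 < e) {m : ℕ} (hm : 1 ≤ m) :
    ∀ n, m ≤ n → S.E (fun ω => Phi e (Mp X m n ω) (Sp X m n ω)) ≤
      ∑ i ∈ Finset.Ico m n, S.E (fun ω => (X (i + 1) ω) ^ 2) := by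
  intro n hn
  induction n, hn using Nat.le_induction with
  | base =>
    have e0 : (fun ω => Phi e (Mp X m m ω) (Sp X m m ω)) = (fun _ => (0:ℝ)) := by
      funext ω
      rw [Mp_self, Sp_self, Phi_zero_zero he]
    rw [e0, S.const, Finset.Ico_self, Finset.sum_empty]
  | succ k hk ih =>
    set Y := X (k + 1) with hYdef
    have hYH : Y ∈ S.H := hX (k + 1)
    obtain ⟨hY1, hY2⟩ := hmean (k + 1) (Nat.le_add_left 1 k)
    have hwk : 0 ≤ S.E (fun ω => (Y ω) ^ 2) :=
      E_nonneg_of S (Hmem_comp1 S hYH locLip_sq) fun ω => sq_nonneg _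
    set wk := S.E (fun ω => (Y ω) ^ 2) with hwkdef
    -- the three relevant functions
    set f1 := (fun ω => Phi e (Mp X m (k+1) ω) (Sp X m (k+1) ω)) with hf1def
    set f2 := (fun ω => Phi e (Mp X m k ω) (Sp X m k ω + Y ω)) with hf2def
    set f3 := (fun ω => Phi e (Mp X m k ω) (Sp X m k ω) + (1 - chi e (Mp X m k ω)) * wk)
      with hf3def
    set f4 := (fun ω => Phi e (Mp X m k ω) (Sp X m k ω) + wk) with hf4def
    -- memberships
    have hf1 : f1 ∈ S.H := Hmem_Phi S X hX he m (k+1)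
    have hf2 : f2 ∈ S.H := by
      have hklt : k < k + 1 := Nat.lt_succ_self k
      have hphi : LocLip (fun x : Fin (k+1) → ℝ =>
          Phi e (tMp m k x) (tSp m k x + x ⟨k, hklt⟩)) := by
        refine locLip_Phi he (K := (k : ℝ) + 1) (by positivity) ?_ ?_ ?_ ?_
        · exact tMp_zero m k
        · simp [tSp_zero m k]
        · intro x y
          refine le_trans (tMp_lip m k x y) ?_
          have : (k : ℝ) ≤ (k : ℝ) + 1 := by linarith
          exact mul_le_mul_of_nonneg_right this (norm_nonneg _)
        · intro x y
          have h1 : |tSp m k x + x ⟨k, hklt⟩ - (tSp m k y + y ⟨k, hklt⟩)| ≤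
              |tSp m k x - tSp m k y| + |x ⟨k, hklt⟩ - y ⟨k, hklt⟩| := by
            have : tSp m k x + x ⟨k, hklt⟩ - (tSp m k y + y ⟨k, hklt⟩) =
                (tSp m k x - tSp m k y) + (x ⟨k, hklt⟩ - y ⟨k, hklt⟩) := by ring
            rw [this]; exact abs_add_le _ _
          refine le_trans h1 ?_
          have h2 := tSp_lip m k x y
          have h3 : |x ⟨k, hklt⟩ - y ⟨k, hklt⟩| ≤ ‖x - y‖ := by
            have := norm_le_pi_norm (x - y) ⟨k, hklt⟩
            simpa using this
          have : ((k:ℝ) + 1) * ‖x - y‖ = (k:ℝ) * ‖x - y‖ + ‖x - y‖ := by ring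
          rw [this]
          exact add_le_add h2 h3
      have key := S.comp_mem (k+1) (fun t : Fin (k+1) => X ((t : ℕ) + 1)) (fun t => hX _) _ hphi
      have e1 : (fun ω => Phi e (tMp m k (fun t : Fin (k+1) => X ((t : ℕ) + 1) ω))
          (tSp m k (fun t : Fin (k+1) => X ((t : ℕ) + 1) ω)
            + (fun t : Fin (k+1) => X ((t : ℕ) + 1) ω) ⟨k, hklt⟩)) = f2 := by
        funext ω
        rw [tMp_eq X m k (Nat.le_succ k) ω, tSp_eq X m k (Nat.le_succ k) ω]
      rwa [e1] at key
    have hPk : (fun ω => Phi e (Mp X m k ω) (Sp X m k ω)) ∈ S.H := Hmem_Phi S X hX he m k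
    have hf3 : f3 ∈ S.H := by
      have hc : ((e:ℝ)/2)^2 ≠ 0 := by positivity
      have hphi : LocLip (fun x : Fin k → ℝ =>
          1 * Phi e (tMp m k x) (tSp m k x) +
          (-(wk / (e/2)^2)) * Phi e (tMp m k x) ((fun _ => (0:ℝ)) x) + wk) := by
        refine locLip_combo ?_ ?_ 1 (-(wk / (e/2)^2)) wk
        · exact locLip_Phi he (K := (k : ℝ)) (Nat.cast_nonneg k) (tMp_zero m k) (tSp_zero m k)
            (fun x y => tMp_lip m k x y) (fun x y => tSp_lip m k x y)
        · refine locLip_Phi he (K := (k : ℝ)) (Nat.cast_nonneg k) (tMp_zero m k) rfl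
            (fun x y => tMp_lip m k x y) (fun x y => ?_)
          simp [norm_nonneg, mul_nonneg]
      have key := S.comp_mem k (fun t : Fin k => X ((t : ℕ) + 1)) (fun t => hX _) _ hphi
      have e1 : (fun ω => 1 * Phi e (tMp m k (fun t : Fin k => X ((t : ℕ) + 1) ω))
            (tSp m k (fun t : Fin k => X ((t : ℕ) + 1) ω)) +
          (-(wk / (e/2)^2)) * Phi e (tMp m k (fun t : Fin k => X ((t : ℕ) + 1) ω)) 0 + wk) = f3 := by
        funext ω
        rw [tMp_eq X m k le_rfl ω, tSp_eq X m k le_rfl ω]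
        have ePhi0 : Phi e (Mp X m k ω) 0 = chi e (Mp X m k ω) * (e/2)^2 := by
          unfold Phi; ring
        rw [ePhi0, hf3def]
        field_simp
        ring
      rwa [e1] at key
    have hf4 : f4 ∈ S.H := Hmem_add_const S hPk wk
    -- step 1: pointwise Phi decreases when the max is updated
    have step1 : S.E f1 ≤ S.E f2 := by
      refine S.mono f2 hf2 f1 hf1 fun ω => ?_
      show Phi e (Mp X m (k+1) ω) (Sp X m (k+1) ω) ≤ Phi e (Mp X m k ω) (Sp X m k ω + Y ω)
      have hmk : m ≤ k := hk
      rw [Mp_succ X hmk ω, Sp_succ X hmk ω]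
      exact Phi_max_le he (Mp X m k ω) (Sp X m k ω + Y ω) (Mp_nonneg X m k ω)
    -- step 2: independence
    have hk1 : 1 ≤ k := le_trans hm hk
    have hphi2 : LocLip (fun q : (Fin k → ℝ) × ℝ =>
        Phi e (tMp m k q.1) (tSp m k q.1 + q.2)) := by
      refine locLip_Phi he (K := (k : ℝ) + 1) (by positivity) ?_ ?_ ?_ ?_
      · exact tMp_zero m k
      · simp [tSp_zero m k]
      · intro q q'
        refine le_trans (tMp_lip m k q.1 q'.1) ?_
        have h1 : ‖q.1 - q'.1‖ ≤ ‖q - q'‖ := norm_fst_le (q - q')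
        have h2 : (0:ℝ) ≤ (k:ℝ) := Nat.cast_nonneg k
        nlinarith [norm_nonneg (q - q')]
      · intro q q'
        have h1 : |tSp m k q.1 + q.2 - (tSp m k q'.1 + q'.2)| ≤
            |tSp m k q.1 - tSp m k q'.1| + |q.2 - q'.2| := by
          have : tSp m k q.1 + q.2 - (tSp m k q'.1 + q'.2) =
              (tSp m k q.1 - tSp m k q'.1) + (q.2 - q'.2) := by ring
          rw [this]; exact abs_add_le _ _
        refine le_trans h1 ?_
        have h2 := tSp_lip m k q.1 q'.1
        have h3 : ‖q.1 - q'.1‖ ≤ ‖q - q'‖ := norm_fst_le (q - q')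
        have h4 : |q.2 - q'.2| ≤ ‖q - q'‖ := by
          have := norm_snd_le (q - q')
          simpa using this
        have h5 : (k:ℝ) * ‖q.1 - q'.1‖ ≤ (k:ℝ) * ‖q - q'‖ :=
          mul_le_mul_of_nonneg_left h3 (Nat.cast_nonneg k)
        have : ((k:ℝ) + 1) * ‖q - q'‖ = (k:ℝ) * ‖q - q'‖ + ‖q - q'‖ := by ring
        rw [this]
        linarith
    have hindepk := hindep k hk1 (fun x y => Phi e (tMp m k x) (tSp m k x + y)) hphi2
    have lhs_eq : (fun ω => Phi e (tMp m k (fun i : Fin k => X ((i : ℕ) + 1) ω))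
        (tSp m k (fun i : Fin k => X ((i : ℕ) + 1) ω) + X (k + 1) ω)) = f2 := by
      funext ω
      rw [tMp_eq X m k le_rfl ω, tSp_eq X m k le_rfl ω]
    have rhs_eq : (fun ω => S.E (fun ω' => Phi e (tMp m k (fun i : Fin k => X ((i : ℕ) + 1) ω))
        (tSp m k (fun i : Fin k => X ((i : ℕ) + 1) ω) + X (k + 1) ω'))) = f3 := by
      funext ω
      rw [tMp_eq X m k le_rfl ω, tSp_eq X m k le_rfl ω]
      rw [E_phi_step S hYH hY1 hY2 he (Mp X m k ω) (Sp X m k ω)]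
    have step2 : S.E f2 = S.E f3 := by
      rw [← lhs_eq, ← rhs_eq]
      exact hindepk
    -- step 3: pointwise bound by the constant
    have step3 : S.E f3 ≤ S.E f4 := by
      refine S.mono f4 hf4 f3 hf3 fun ω => ?_
      show Phi e (Mp X m k ω) (Sp X m k ω) + (1 - chi e (Mp X m k ω)) * wk ≤
        Phi e (Mp X m k ω) (Sp X m k ω) + wk
      have h1 := chi_nonneg e (Mp X m k ω)
      nlinarith [mul_nonneg h1 hwk]
    have step4 : S.E f4 = S.E (fun ω => Phi e (Mp X m k ω) (Sp X m k ω)) + wk :=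
      E_add_const S hPk wk
    rw [Finset.sum_Ico_succ_top hk]
    calc S.E f1 ≤ S.E f2 := step1
      _ = S.E f3 := step2
      _ ≤ S.E f4 := step3
      _ = S.E (fun ω => Phi e (Mp X m k ω) (Sp X m k ω)) + wk := step4
      _ ≤ (∑ i ∈ Finset.Ico m k, S.E (fun ω => (X (i + 1) ω) ^ 2)) + wk := by
          exact add_le_add ih le_rfl
      _ = (∑ i ∈ Finset.Ico m k, S.E (fun ω => (X (i + 1) ω) ^ 2))
          + S.E (fun ω => (X (k + 1) ω) ^ 2) := rfl

end Kolmogorov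


section Cheb

variable {Ω : Type*} (S : SubLinExp Ω) (X : ℕ → Ω → ℝ)

lemma le_Mp {m r j : ℕ} (hr : m ≤ r) (hrj : r ≤ j) (ω : Ω) :
    |Sp X m r ω| ≤ Mp X m j ω :=
  (Finset.le_fold_max _).mpr (Or.inr ⟨r, Finset.mem_Icc.mpr ⟨hr, hrj⟩, le_rfl⟩)

lemma Mp_mono_right (m : ℕ) {j j' : ℕ} (h : j ≤ j') (ω : Ω) :
    Mp X m j ω ≤ Mp X m j' ω := by
  refine (Finset.fold_max_le _).mpr ⟨Mp_nonneg X m j' ω, fun r hr => ?_⟩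
  obtain ⟨hmr, hrj⟩ := Finset.mem_Icc.mp hr
  exact le_Mp X hmr (le_trans hrj h) ω

/-- Chebyshev + Kolmogorov: capacity of the maximal event. -/
lemma V_event_bound (hind : ∀ A : Set Ω, (A.indicator fun _ => (1:ℝ)) ∈ S.H)
    (hX : ∀ i, X i ∈ S.H) (hindep : IndepSeq1 S X)
    (hmean : ∀ i, 1 ≤ i → S.E (X i) = 0 ∧ S.E (fun ω => -X i ω) = 0)
    {e : ℝ} (he : 0 < e) {m n : ℕ} (hm : 1 ≤ m) (hn : m ≤ n) :
    genV S {ω | e ≤ Mp X m n ω} ≤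
      (∑ i ∈ Finset.Ico m n, S.E (fun ω => (X (i + 1) ω) ^ 2)) / (e / 2) ^ 2 := by
  set c : ℝ := (e / 2) ^ 2 with hcdef
  have hc : 0 < c := by positivity
  have hPn : (fun ω => Phi e (Mp X m n ω) (Sp X m n ω)) ∈ S.H := Hmem_Phi S X hX he m n
  have hg : (fun ω => c⁻¹ * Phi e (Mp X m n ω) (Sp X m n ω)) ∈ S.H := Hmem_smul S hPn c⁻¹
  have hpt : ∀ ω, ({ω | e ≤ Mp X m n ω}.indicator (fun _ => (1:ℝ))) ω ≤
      c⁻¹ * Phi e (Mp X m n ω) (Sp X m n ω) := by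
    intro ω
    by_cases hmem : ω ∈ {ω | e ≤ Mp X m n ω}
    · rw [Set.indicator_of_mem hmem]
      have : Phi e (Mp X m n ω) (Sp X m n ω) = c := Phi_of_ge he hmem
      rw [this, inv_mul_cancel₀ (ne_of_gt hc)]
    · rw [Set.indicator_of_notMem hmem]
      have := Phi_nonneg (e := e) (Mp X m n ω) (Sp X m n ω)
      positivity
  have h1 : genV S {ω | e ≤ Mp X m n ω} ≤
      S.E (fun ω => c⁻¹ * Phi e (Mp X m n ω) (Sp X m n ω)) :=
    S.mono _ hg _ (hind _) hpt
  have h2 : S.E (fun ω => c⁻¹ * Phi e (Mp X m n ω) (Sp X m n ω)) =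
      c⁻¹ * S.E (fun ω => Phi e (Mp X m n ω) (Sp X m n ω)) :=
    S.homog c⁻¹ (by positivity) _ hPn
  have h3 := EPhi_bound S X hX hindep hmean he hm n hn
  have h4 : c⁻¹ * S.E (fun ω => Phi e (Mp X m n ω) (Sp X m n ω)) ≤
      c⁻¹ * (∑ i ∈ Finset.Ico m n, S.E (fun ω => (X (i + 1) ω) ^ 2)) :=
    mul_le_mul_of_nonneg_left h3 (by positivity)
  calc genV S {ω | e ≤ Mp X m n ω}
      ≤ c⁻¹ * S.E (fun ω => Phi e (Mp X m n ω) (Sp X m n ω)) := by rw [← h2]; exact h1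
    _ ≤ c⁻¹ * (∑ i ∈ Finset.Ico m n, S.E (fun ω => (X (i + 1) ω) ^ 2)) := h4
    _ = (∑ i ∈ Finset.Ico m n, S.E (fun ω => (X (i + 1) ω) ^ 2)) / c := by
        rw [div_eq_inv_mul]

end Cheb


section Diff

variable {Ω : Type*}

lemma Icc_sum_eq (X : ℕ → Ω → ℝ) (r : ℕ) (ω : Ω) :
    ∑ i ∈ Finset.Icc 1 r, X i ω = Sp X 0 r ω := by
  unfold Sp
  rw [← Finset.Ico_add_one_right_eq_Icc, Finset.sum_Ico_eq_sum_range, ← Finset.range_eq_Ico]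
  simp only [Nat.succ_sub_one, Nat.add_sub_cancel]
  exact Finset.sum_congr rfl fun i _ => by rw [add_comm]

lemma Sp_eq_diff (X : ℕ → Ω → ℝ) {m n : ℕ} (h : m ≤ n) (ω : Ω) :
    Sp X m n ω = (∑ i ∈ Finset.Icc 1 n, X i ω) - (∑ i ∈ Finset.Icc 1 m, X i ω) := by
  have key : Sp X 0 m ω + Sp X m n ω = Sp X 0 n ω :=
    Finset.sum_Ico_consecutive (fun i => X (i + 1) ω) (Nat.zero_le m) h
  rw [Icc_sum_eq, Icc_sum_eq]
  linarith

end Diff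
end RSAux

/-- Convergence of random series: if `{Xᵢ}` are independent with
`Ê(Xᵢ) = ε̂(Xᵢ) = 0` and `Σᵢ Ê(Xᵢ²) < ∞`, and `Ê` is regular with continuous
generated capacity `V`, then `Σᵢ Xᵢ` converges a.s. `V`. -/
theorem random_series_converges {Ω : Type*} (S : SubLinExp Ω)
    (hreg : Regular S)
    (hind : ∀ A : Set Ω, (A.indicator fun _ => (1 : ℝ)) ∈ S.H)
    (hcont : ContCapacity (genV S))
    (X : ℕ → Ω → ℝ) (hX : ∀ i, X i ∈ S.H)
    (hindep : IndepSeq1 S X)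
    (hmean : ∀ i, 1 ≤ i → S.E (X i) = 0 ∧ S.E (fun ω => -X i ω) = 0)
    (hsum : Summable fun i : ℕ => S.E fun ω => (X (i + 1) ω) ^ 2) :
    genV S {ω | ¬ ∃ L : ℝ,
      Tendsto (fun n : ℕ => ∑ i ∈ Finset.Icc 1 n, X i ω) atTop (nhds L)} = 0 := by
  classical
  set w : ℕ → ℝ := fun i => S.E (fun ω => (X (i + 1) ω) ^ 2) with hwdef
  have hw0 : ∀ i, 0 ≤ w i := fun i =>
    RSAux.E_nonneg_of S (RSAux.Hmem_comp1 S (hX (i + 1)) RSAux.locLip_sq) fun ω => sq_nonneg _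
  have hsumw : Summable w := hsum
  set t : ℕ → ℝ := fun m => ∑' k, w (k + m) with htdef
  have ht0 : Tendsto t atTop (nhds 0) := tendsto_sum_nat_add w
  have htail : ∀ m n : ℕ, (∑ i ∈ Finset.Ico m n, w i) ≤ t m := by
    intro m n
    have hsummable : Summable (fun k => w (k + m)) := (summable_nat_add_iff m).mpr hsumw
    rw [Finset.sum_Ico_eq_sum_range]
    calc ∑ i ∈ Finset.range (n - m), w (m + i)
        = ∑ i ∈ Finset.range (n - m), w (i + m) :=
          Finset.sum_congr rfl fun i _ => by rw [add_comm]
      _ ≤ ∑' k, w (k + m) := Summable.sum_le_tsum _ (fun i _ => hw0 _) hsummable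
  -- the events
  set Es : ℕ → ℕ → ℕ → Set Ω := fun j m n => {ω | 1 / ((j : ℝ) + 1) ≤ RSAux.Mp X m n ω}
    with hEsdef
  set A : ℕ → ℕ → Set Ω := fun j m => ⋃ n, Es j m n with hAdef
  set D : ℕ → Set Ω := fun j => ⋂ m, A j m with hDdef
  have hej : ∀ j : ℕ, (0 : ℝ) < 1 / ((j : ℝ) + 1) := fun j => by positivity
  -- capacity bound for A j m
  have hVA : ∀ j m : ℕ, 1 ≤ m →
      genV S (A j m) ≤ t m / ((1 / ((j : ℝ) + 1)) / 2) ^ 2 := by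
    intro j m hm
    have hmono : Monotone (fun n => Es j m n) := fun n n' hnn ω hω =>
      le_trans hω (RSAux.Mp_mono_right X m hnn ω)
    have hlim : Tendsto (fun n => genV S (Es j m n)) atTop (nhds (genV S (⋃ n, Es j m n))) :=
      hcont.1 (fun n => Es j m n) hmono
    refine le_of_tendsto hlim ?_
    filter_upwards [eventually_ge_atTop m] with n hn
    calc genV S (Es j m n)
        ≤ (∑ i ∈ Finset.Ico m n, w i) / ((1 / ((j : ℝ) + 1)) / 2) ^ 2 :=
          RSAux.V_event_bound S X hind hX hindep hmean (hej j) hm hn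
      _ ≤ t m / ((1 / ((j : ℝ) + 1)) / 2) ^ 2 :=
          div_le_div_of_nonneg_right (htail m n) (by positivity)
  have hVD : ∀ j, genV S (D j) = 0 := by
    intro j
    have hle : ∀ m : ℕ, 1 ≤ m → genV S (D j) ≤ t m / ((1 / ((j : ℝ) + 1)) / 2) ^ 2 :=
      fun m hm => le_trans (RSAux.genV_mono S hind (Set.iInter_subset _ m)) (hVA j m hm)
    have htend : Tendsto (fun m => t m / ((1 / ((j : ℝ) + 1)) / 2) ^ 2) atTop (nhds 0) := by
      have := ht0.div_const (((1 / ((j : ℝ) + 1)) / 2) ^ 2)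
      simpa using this
    have h0 : genV S (D j) ≤ 0 := by
      refine ge_of_tendsto htend ?_
      filter_upwards [eventually_ge_atTop 1] with m hm
      exact hle m hm
    exact le_antisymm h0 (RSAux.genV_nonneg S hind _)
  have hDmono : Monotone D := by
    intro j j' hj ω hω
    simp only [hDdef, Set.mem_iInter] at hω ⊢
    intro m
    obtain ⟨n, hn⟩ := Set.mem_iUnion.mp (hω m)
    refine Set.mem_iUnion.mpr ⟨n, ?_⟩
    have hjj : 1 / ((j' : ℝ) + 1) ≤ 1 / ((j : ℝ) + 1) := by
      apply one_div_le_one_div_of_le (by positivity)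
      have : (j : ℝ) ≤ (j' : ℝ) := by exact_mod_cast hj
      linarith
    exact le_trans hjj hn
  have hVU : genV S (⋃ j, D j) = 0 := by
    have hlim : Tendsto (fun j => genV S (D j)) atTop (nhds (genV S (⋃ j, D j))) :=
      hcont.1 D hDmono
    have hconst : (fun j => genV S (D j)) = fun _ => (0 : ℝ) := funext hVD
    rw [hconst] at hlim
    exact (tendsto_nhds_unique hlim tendsto_const_nhds)
  -- inclusion of the divergence set
  have hincl : {ω | ¬ ∃ L : ℝ,
      Tendsto (fun n : ℕ => ∑ i ∈ Finset.Icc 1 n, X i ω) atTop (nhds L)} ⊆ ⋃ j, D j := by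
    intro ω hω
    simp only [Set.mem_setOf_eq] at hω
    set u : ℕ → ℝ := fun n => ∑ i ∈ Finset.Icc 1 n, X i ω with hu
    have hnotC : ¬ CauchySeq u := fun hC => hω (cauchySeq_tendsto_of_complete hC)
    rw [Metric.cauchySeq_iff'] at hnotC
    push_neg at hnotC
    obtain ⟨ε, hε, hdiv⟩ := hnotC
    obtain ⟨j, hj⟩ := exists_nat_one_div_lt hε
    refine Set.mem_iUnion.mpr ⟨j, Set.mem_iInter.mpr fun m => ?_⟩
    obtain ⟨n, hnm, hd⟩ := hdiv m
    refine Set.mem_iUnion.mpr ⟨n, ?_⟩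
    show 1 / ((j : ℝ) + 1) ≤ RSAux.Mp X m n ω
    have hdist : ε ≤ |RSAux.Sp X m n ω| := by
      rw [RSAux.Sp_eq_diff X hnm ω]
      rw [Real.dist_eq] at hd
      exact hd
    calc 1 / ((j : ℝ) + 1) ≤ ε := le_of_lt hj
      _ ≤ |RSAux.Sp X m n ω| := hdist
      _ ≤ RSAux.Mp X m n ω := RSAux.le_Mp X hnm le_rfl ω
  have hfinal := RSAux.genV_mono S hind hincl
  rw [hVU] at hfinal
  exact le_antisymm hfinal (RSAux.genV_nonneg S hind _)
end

section
/- (Exponential lower-capacity estimate.) Let {X_j} be an IID sequence in a sublinear expectation space (Ω, H, Ê), with indicators of events lying in H, and let v(A) := −Ê(−1_A). Let g : ℝ → ℝ be a nonnegative function in C_{l,Lip}(ℝ) with 1{x ≥ 1} ≤ g(x) ≤ 1{x > 1/2} for all x. Fix M > 0 and p ≥ 1. Then for every n ≥ 1 and every l ≥ 1, v( Σ_{j=1}^n g(|X_j| / (Mj)^{1/p}) < l ) ≤ e^{l/2} · exp( −(1/4) Σ_{j=1}^n Ê[ g(|X₁| / (Mj)^{1/p}) ] ). -/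
open Filter MeasureTheory Set

lemma key_exp {u v : ℝ} (hv : v ≤ 0) (huv : u ≤ v) :
    Real.exp v - Real.exp u ≤ v - u := by
  have k1 : Real.exp v * Real.exp (u - v) = Real.exp u := by
    rw [← Real.exp_add]; ring_nf
  have k2 : Real.exp v ≤ 1 := Real.exp_le_one_iff.mpr hv
  have k3 : (u - v) + 1 ≤ Real.exp (u - v) := Real.add_one_le_exp _
  have k4 : Real.exp (u - v) ≤ 1 := Real.exp_le_one_iff.mpr (by linarith)
  nlinarith [mul_nonneg (by linarith : (0:ℝ) ≤ 1 - Real.exp (u - v))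
    (by linarith : (0:ℝ) ≤ 1 - Real.exp v)]

lemma abs_exp_sub_exp_le {a b : ℝ} (ha : a ≤ 0) (hb : b ≤ 0) :
    |Real.exp a - Real.exp b| ≤ |a - b| := by
  rcases le_total a b with h | h
  · rw [abs_of_nonpos (by linarith [Real.exp_le_exp.mpr h]),
      abs_of_nonpos (by linarith)]
    have := key_exp hb h; linarith
  · rw [abs_of_nonneg (by linarith [Real.exp_le_exp.mpr h]),
      abs_of_nonneg (by linarith)]
    have := key_exp ha h; linarith

lemma exp_neg_half_le {t : ℝ} (h0 : 0 ≤ t) (h1 : t ≤ 1) :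
    Real.exp (-(t / 2)) ≤ 1 - t / 4 := by
  have key : Real.exp (-(t/2)) * Real.exp (t/2) = 1 := by
    rw [← Real.exp_add]; simp
  nlinarith [Real.add_one_le_exp (t/2), Real.exp_pos (-(t/2))]

lemma prodIcc (f : ℕ → ℝ) (k : ℕ) :
    ∏ j ∈ Finset.Icc 1 k, f j = ∏ j : Fin k, f ((j : ℕ) + 1) := by
  induction k with
  | zero => simp
  | succ k ih =>
    rw [Finset.prod_Icc_succ_top (by omega), ih, Fin.prod_univ_castSucc]
    simp

lemma sumIcc (f : ℕ → ℝ) (k : ℕ) :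
    ∑ j ∈ Finset.Icc 1 k, f j = ∑ j : Fin k, f ((j : ℕ) + 1) := by
  induction k with
  | zero => simp
  | succ k ih =>
    rw [Finset.sum_Icc_succ_top (by omega), ih, Fin.sum_univ_castSucc]
    simp

lemma one_add_pow_le' {a b c d : ℝ} (m : ℕ) (ha : 0 ≤ a) (hb : 0 ≤ b)
    (hac : a ≤ c) (hbd : b ≤ d) :
    1 + a ^ m + b ^ m ≤ 1 + c ^ m + d ^ m := by
  have h1 := pow_le_pow_left₀ ha hac m
  have h2 := pow_le_pow_left₀ hb hbd m
  linarith

lemma prod_lip : ∀ (k : ℕ) (f : Fin k → ℝ → ℝ), (∀ j x, |f j x| ≤ 1) →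
    ∀ (D : Fin k → ℝ), (∀ j, 0 ≤ D j) → ∀ (m : ℕ),
    (∀ j x y, |f j x - f j y| ≤ D j * (1 + |x| ^ m + |y| ^ m) * |x - y|) →
    ∀ x y : Fin k → ℝ,
      |(∏ j, f j (x j)) - ∏ j, f j (y j)| ≤
        (∑ j, D j) * (1 + ‖x‖ ^ m + ‖y‖ ^ m) * ‖x - y‖ := by
  intro k
  induction k with
  | zero => intro f hb D hD m hf x y; simp
  | succ k ih =>
    intro f hb D hD m hf x y
    set x' : Fin k → ℝ := fun j => x j.succ with hx'def
    set y' : Fin k → ℝ := fun j => y j.succ with hy'def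
    have hx' : ‖x'‖ ≤ ‖x‖ :=
      (pi_norm_le_iff_of_nonneg (norm_nonneg x)).mpr fun j => norm_le_pi_norm x j.succ
    have hy' : ‖y'‖ ≤ ‖y‖ :=
      (pi_norm_le_iff_of_nonneg (norm_nonneg y)).mpr fun j => norm_le_pi_norm y j.succ
    have hxy' : ‖x' - y'‖ ≤ ‖x - y‖ := by
      refine (pi_norm_le_iff_of_nonneg (norm_nonneg (x - y))).mpr fun j => ?_
      have : (x' - y') j = (x - y) j.succ := by simp [hx'def, hy'def]
      rw [this]; exact norm_le_pi_norm (x - y) j.succ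
    have hDs : (0:ℝ) ≤ ∑ j : Fin k, D j.succ := Finset.sum_nonneg fun j _ => hD j.succ
    have ihb := ih (fun j => f j.succ) (fun j z => hb j.succ z) (fun j => D j.succ)
      (fun j => hD j.succ) m (fun j u v => hf j.succ u v) x' y'
    have hA : |f 0 (x 0) - f 0 (y 0)| ≤ D 0 * (1 + ‖x‖ ^ m + ‖y‖ ^ m) * ‖x - y‖ := by
      refine (hf 0 (x 0) (y 0)).trans ?_
      have h3 : |x 0 - y 0| ≤ ‖x - y‖ := by
        have : x 0 - y 0 = (x - y) 0 := by simp
        rw [this]; exact norm_le_pi_norm (x - y) 0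
      refine mul_le_mul (mul_le_mul_of_nonneg_left ?_ (hD 0)) h3 (abs_nonneg _)
        (mul_nonneg (hD 0) (by positivity))
      exact one_add_pow_le' m (abs_nonneg _) (abs_nonneg _)
        (norm_le_pi_norm x 0) (norm_le_pi_norm y 0)
    have hB : |(∏ j : Fin k, f j.succ (x' j)) - ∏ j : Fin k, f j.succ (y' j)| ≤
        (∑ j : Fin k, D j.succ) * (1 + ‖x‖ ^ m + ‖y‖ ^ m) * ‖x - y‖ := by
      refine ihb.trans ?_
      refine mul_le_mul (mul_le_mul_of_nonneg_left ?_ hDs) hxy' (norm_nonneg _)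
        (mul_nonneg hDs (by positivity))
      exact one_add_pow_le' m (norm_nonneg _) (norm_nonneg _) hx' hy'
    have hbB : |∏ j : Fin k, f j.succ (x' j)| ≤ 1 := by
      rw [Finset.abs_prod]
      exact Finset.prod_le_one (fun _ _ => abs_nonneg _) (fun j _ => hb j.succ _)
    rw [Fin.prod_univ_succ, Fin.prod_univ_succ, Fin.sum_univ_succ]
    have key : |f 0 (x 0) * ∏ j : Fin k, f j.succ (x j.succ) -
        f 0 (y 0) * ∏ j : Fin k, f j.succ (y j.succ)| ≤
        |∏ j : Fin k, f j.succ (x' j)| * |f 0 (x 0) - f 0 (y 0)| +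
        |f 0 (y 0)| * |(∏ j : Fin k, f j.succ (x' j)) - ∏ j : Fin k, f j.succ (y' j)| := by
      have heq : f 0 (x 0) * ∏ j : Fin k, f j.succ (x j.succ) -
          f 0 (y 0) * ∏ j : Fin k, f j.succ (y j.succ) =
          (∏ j : Fin k, f j.succ (x' j)) * (f 0 (x 0) - f 0 (y 0)) +
          f 0 (y 0) * ((∏ j : Fin k, f j.succ (x' j)) - ∏ j : Fin k, f j.succ (y' j)) := by
        simp only [hx'def, hy'def]; ring
      rw [heq]
      exact (abs_add_le _ _).trans (by rw [abs_mul, abs_mul])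
    refine key.trans ?_
    have e1 : |∏ j : Fin k, f j.succ (x' j)| * |f 0 (x 0) - f 0 (y 0)| ≤
        D 0 * (1 + ‖x‖ ^ m + ‖y‖ ^ m) * ‖x - y‖ := by
      refine le_trans ?_ hA
      calc |∏ j : Fin k, f j.succ (x' j)| * |f 0 (x 0) - f 0 (y 0)|
          ≤ 1 * |f 0 (x 0) - f 0 (y 0)| :=
            mul_le_mul_of_nonneg_right hbB (abs_nonneg _)
        _ = _ := one_mul _
    have e2 : |f 0 (y 0)| * |(∏ j : Fin k, f j.succ (x' j)) - ∏ j : Fin k, f j.succ (y' j)| ≤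
        (∑ j : Fin k, D j.succ) * (1 + ‖x‖ ^ m + ‖y‖ ^ m) * ‖x - y‖ := by
      refine le_trans ?_ hB
      calc |f 0 (y 0)| * |(∏ j : Fin k, f j.succ (x' j)) - ∏ j : Fin k, f j.succ (y' j)|
          ≤ 1 * |(∏ j : Fin k, f j.succ (x' j)) - ∏ j : Fin k, f j.succ (y' j)| :=
            mul_le_mul_of_nonneg_right (hb 0 _) (abs_nonneg _)
        _ = _ := one_mul _
    have := add_le_add e1 e2
    refine this.trans (le_of_eq ?_)
    ring


lemma prod_pair_lip {k : ℕ} (F : Fin k → ℝ → ℝ) (h : ℝ → ℝ)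
    (hFb : ∀ j x, |F j x| ≤ 1) (hhb : ∀ x, |h x| ≤ 1)
    (D : Fin k → ℝ) (hD : ∀ j, 0 ≤ D j) (Dh : ℝ) (hDh : 0 < Dh) (m : ℕ)
    (hF : ∀ j x y, |F j x - F j y| ≤ D j * (1 + |x| ^ m + |y| ^ m) * |x - y|)
    (hh : ∀ x y, |h x - h y| ≤ Dh * (1 + |x| ^ m + |y| ^ m) * |x - y|) :
    LocLip (fun q : (Fin k → ℝ) × ℝ => (-1 : ℝ) * ((∏ j, F j (q.1 j)) * h q.2)) := by
  have hDs : (0:ℝ) ≤ ∑ j, D j := Finset.sum_nonneg fun j _ => hD j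
  refine ⟨(∑ j, D j) + Dh, by linarith, m, fun q q' => ?_⟩
  have hbx' : |∏ j, F j (q'.1 j)| ≤ 1 := by
    rw [Finset.abs_prod]
    exact Finset.prod_le_one (fun _ _ => abs_nonneg _) (fun j _ => hFb _ _)
  have hkey : (-1 : ℝ) * ((∏ j, F j (q.1 j)) * h q.2) -
      (-1 : ℝ) * ((∏ j, F j (q'.1 j)) * h q'.2) =
      -(((∏ j, F j (q.1 j)) - ∏ j, F j (q'.1 j)) * h q.2 +
        (∏ j, F j (q'.1 j)) * (h q.2 - h q'.2)) := by ring
  have habs : |(-1 : ℝ) * ((∏ j, F j (q.1 j)) * h q.2) -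
      (-1 : ℝ) * ((∏ j, F j (q'.1 j)) * h q'.2)| ≤
      |(∏ j, F j (q.1 j)) - ∏ j, F j (q'.1 j)| + |h q.2 - h q'.2| := by
    rw [hkey, abs_neg]
    refine (abs_add_le _ _).trans ?_
    rw [abs_mul, abs_mul]
    have b1 := mul_le_mul_of_nonneg_left (hhb q.2) (abs_nonneg ((∏ j, F j (q.1 j)) - ∏ j, F j (q'.1 j)))
    have b2 := mul_le_mul_of_nonneg_right hbx' (abs_nonneg (h q.2 - h q'.2))
    nlinarith [abs_nonneg ((∏ j, F j (q.1 j)) - ∏ j, F j (q'.1 j)), abs_nonneg (h q.2 - h q'.2)]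
  refine habs.trans ?_
  have hfst : ‖q.1 - q'.1‖ ≤ ‖q - q'‖ := by
    have : q.1 - q'.1 = (q - q').1 := rfl
    rw [this]; exact norm_fst_le _
  have hsnd : |q.2 - q'.2| ≤ ‖q - q'‖ := by
    have : q.2 - q'.2 = (q - q').2 := rfl
    rw [this, ← Real.norm_eq_abs]; exact norm_snd_le _
  have hq1 : ‖q.1‖ ≤ ‖q‖ := norm_fst_le _
  have hq1' : ‖q'.1‖ ≤ ‖q'‖ := norm_fst_le _
  have hq2 : |q.2| ≤ ‖q‖ := by rw [← Real.norm_eq_abs]; exact norm_snd_le _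
  have hq2' : |q'.2| ≤ ‖q'‖ := by rw [← Real.norm_eq_abs]; exact norm_snd_le _
  have e1 : |(∏ j, F j (q.1 j)) - ∏ j, F j (q'.1 j)| ≤
      (∑ j, D j) * (1 + ‖q‖ ^ m + ‖q'‖ ^ m) * ‖q - q'‖ := by
    refine (prod_lip k F hFb D hD m hF q.1 q'.1).trans ?_
    refine mul_le_mul (mul_le_mul_of_nonneg_left ?_ hDs) hfst (norm_nonneg _)
      (mul_nonneg hDs (by positivity))
    exact one_add_pow_le' m (norm_nonneg _) (norm_nonneg _) hq1 hq1'
  have e2 : |h q.2 - h q'.2| ≤ Dh * (1 + ‖q‖ ^ m + ‖q'‖ ^ m) * ‖q - q'‖ := by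
    refine (hh q.2 q'.2).trans ?_
    refine mul_le_mul (mul_le_mul_of_nonneg_left ?_ hDh.le) hsnd (abs_nonneg _)
      (mul_nonneg hDh.le (by positivity))
    exact one_add_pow_le' m (abs_nonneg _) (abs_nonneg _) hq2 hq2'
  have := add_le_add e1 e2
  refine this.trans (le_of_eq ?_)
  ring

lemma mem_comp1 {Ω : Type*} (S : SubLinExp Ω) {Z : Ω → ℝ} (hZ : Z ∈ S.H)
    {φ : ℝ → ℝ} (hφ : LocLip φ) : (fun ω => φ (Z ω)) ∈ S.H := by
  obtain ⟨C, hC, m, hL⟩ := hφ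
  have := S.comp_mem 1 (fun _ => Z) (fun _ => hZ) (fun x => φ (x 0)) ?_
  · exact this
  refine ⟨C, hC, m, fun x y => ?_⟩
  refine (hL (x 0) (y 0)).trans ?_
  have h3 : ‖x 0 - y 0‖ ≤ ‖x - y‖ := by
    have : x 0 - y 0 = (x - y) 0 := by simp
    rw [this]; exact norm_le_pi_norm (x - y) 0
  refine mul_le_mul (mul_le_mul_of_nonneg_left ?_ hC.le) h3 (norm_nonneg _)
    (mul_nonneg hC.le (by positivity))
  exact one_add_pow_le' m (norm_nonneg _) (norm_nonneg _)
    (norm_le_pi_norm x 0) (norm_le_pi_norm y 0)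

lemma E_shift {Ω : Type*} (S : SubLinExp Ω) {Z : Ω → ℝ} (hZ : Z ∈ S.H) (c : ℝ) :
    S.E (fun ω => c + Z ω) = c + S.E Z := by
  have hcZ : (fun ω => c + Z ω) ∈ S.H := by
    refine mem_comp1 S hZ ⟨1, one_pos, 0, fun x y => ?_⟩
    simp [abs_sub_comm]
    nlinarith [abs_nonneg (x - y), abs_sub_abs_le_abs_sub x y, le_abs_self (x-y), neg_abs_le (x-y)]
  have h1 := S.subadd _ (S.const_mem c) _ hZ
  have h2 := S.subadd _ hcZ _ (S.const_mem (-c))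
  have e : (fun ω => (fun ω' => c + Z ω') ω + (fun _ => (-c : ℝ)) ω) = Z := by
    funext ω; simp
  rw [e] at h2
  rw [S.const] at h1 h2
  have h1' : S.E (fun ω => c + Z ω) ≤ c + S.E Z := by
    have e2 : (fun ω => (fun _ => c) ω + Z ω) = fun ω => c + Z ω := rfl
    rw [e2] at h1; linarith
  linarith

lemma E_le_const {Ω : Type*} (S : SubLinExp Ω) {Z : Ω → ℝ} (hZ : Z ∈ S.H) {c : ℝ}
    (h : ∀ ω, Z ω ≤ c) : S.E Z ≤ c := by
  have := S.mono _ (S.const_mem c) _ hZ h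
  rwa [S.const] at this

lemma const_le_E {Ω : Type*} (S : SubLinExp Ω) {Z : Ω → ℝ} (hZ : Z ∈ S.H) {c : ℝ}
    (h : ∀ ω, c ≤ Z ω) : c ≤ S.E Z := by
  have := S.mono _ hZ _ (S.const_mem c) h
  rwa [S.const] at this

lemma main_aux {Ω : Type*} (S : SubLinExp Ω) (X : ℕ → Ω → ℝ) (hX : ∀ i, X i ∈ S.H)
    (hind : ∀ A : Set Ω, (A.indicator fun _ => (1 : ℝ)) ∈ S.H)
    (hindep : IndepSeq1 S X) (hid : IdentDist1 S X)
    (g : ℝ → ℝ) (hg0 : ∀ x, 0 ≤ g x) (hg1 : ∀ x, g x ≤ 1) (hgL : LocLip g)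
    (c : ℕ → ℝ) (hc : ∀ j : ℕ, 1 ≤ j → 0 < c j)
    (n : ℕ) (hn : 1 ≤ n) (l : ℝ) :
    -S.E (fun ω => -({ω' | ∑ j ∈ Finset.Icc 1 n,
          g (|X j ω'| / c j) < l}.indicator (fun _ => (1 : ℝ)) ω))
      ≤ Real.exp (l / 2) * Real.exp (-(1 / 4) *
          ∑ j ∈ Finset.Icc 1 n, S.E (fun ω => g (|X 1 ω| / c j))) := by
  obtain ⟨C, hC, m, hgLip⟩ := hgL
  simp only [Real.norm_eq_abs] at hgLip
  -- Lipschitz bound for x ↦ g(|x|/c j)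
  have hGlip : ∀ j : ℕ, 1 ≤ j → ∀ x y : ℝ,
      |g (|x| / c j) - g (|y| / c j)| ≤
        (C * (1 + ((c j)⁻¹) ^ m) * (c j)⁻¹) * (1 + |x| ^ m + |y| ^ m) * |x - y| := by
    intro j hj x y
    have hcj := hc j hj
    have hx0 : (0:ℝ) ≤ |x| / c j := by positivity
    have hy0 : (0:ℝ) ≤ |y| / c j := by positivity
    have e1 : abs (|x| / c j - |y| / c j) ≤ |x - y| * (c j)⁻¹ := by
      rw [div_sub_div_same, abs_div, abs_of_pos hcj, div_eq_mul_inv]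
      exact mul_le_mul_of_nonneg_right (abs_abs_sub_abs_le_abs_sub x y)
        (inv_nonneg.mpr hcj.le)
    have key : 1 + (|x| / c j) ^ m + (|y| / c j) ^ m ≤
        (1 + ((c j)⁻¹) ^ m) * (1 + |x| ^ m + |y| ^ m) := by
      rw [div_eq_mul_inv, div_eq_mul_inv, mul_pow, mul_pow]
      have ht : (0:ℝ) ≤ ((c j)⁻¹) ^ m := by positivity
      have ha : (0:ℝ) ≤ |x| ^ m := by positivity
      have hb : (0:ℝ) ≤ |y| ^ m := by positivity
      nlinarith [mul_nonneg ht ha, mul_nonneg ht hb]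
    refine (hgLip (|x| / c j) (|y| / c j)).trans ?_
    rw [abs_of_nonneg hx0, abs_of_nonneg hy0]
    calc C * (1 + (|x| / c j) ^ m + (|y| / c j) ^ m) * abs (|x| / c j - |y| / c j)
        ≤ C * ((1 + ((c j)⁻¹) ^ m) * (1 + |x| ^ m + |y| ^ m)) * (|x - y| * (c j)⁻¹) := by
          refine mul_le_mul (mul_le_mul_of_nonneg_left key hC.le) e1 (abs_nonneg _)
            (mul_nonneg hC.le (by positivity))
      _ = (C * (1 + ((c j)⁻¹) ^ m) * (c j)⁻¹) * (1 + |x| ^ m + |y| ^ m) * |x - y| := by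
          ring
  have hDpos : ∀ j : ℕ, 1 ≤ j → 0 < C * (1 + ((c j)⁻¹) ^ m) * (c j)⁻¹ := by
    intro j hj
    have := hc j hj
    positivity
  -- Lipschitz bound for x ↦ exp(-(g(|x|/c j)/2))
  have hHlip : ∀ j : ℕ, 1 ≤ j → ∀ x y : ℝ,
      |Real.exp (-(g (|x| / c j) / 2)) - Real.exp (-(g (|y| / c j) / 2))| ≤
        (C * (1 + ((c j)⁻¹) ^ m) * (c j)⁻¹) * (1 + |x| ^ m + |y| ^ m) * |x - y| := by
    intro j hj x y
    have h1 := abs_exp_sub_exp_le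
      (a := -(g (|x| / c j) / 2)) (b := -(g (|y| / c j) / 2))
      (by nlinarith [hg0 (|x| / c j)]) (by nlinarith [hg0 (|y| / c j)])
    have h2 : |(-(g (|x| / c j) / 2)) - (-(g (|y| / c j) / 2))| =
        |g (|x| / c j) - g (|y| / c j)| / 2 := by
      rw [show (-(g (|x| / c j) / 2)) - (-(g (|y| / c j) / 2)) =
        -((g (|x| / c j) - g (|y| / c j)) / 2) by ring, abs_neg, abs_div]
      norm_num
    have h3 := hGlip j hj x y
    have h4 : (0:ℝ) ≤ (C * (1 + ((c j)⁻¹) ^ m) * (c j)⁻¹) * (1 + |x| ^ m + |y| ^ m) * |x - y| := by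
      have := (hDpos j hj).le
      have hR : (0:ℝ) ≤ 1 + |x| ^ m + |y| ^ m := by positivity
      positivity
    rw [h2] at h1
    linarith
  have hHbd : ∀ j x, |Real.exp (-(g (|x| / c j) / 2))| ≤ 1 := by
    intro j x
    rw [abs_of_pos (Real.exp_pos _)]
    exact Real.exp_le_one_iff.mpr (by nlinarith [hg0 (|x| / c j)])
  have hHpos : ∀ j x, 0 < Real.exp (-(g (|x| / c j) / 2)) := fun j x => Real.exp_pos _
  -- membership of scaled products
  have hPmem : ∀ (k : ℕ) (s : ℝ),
      (fun ω => s * ∏ j : Fin k, Real.exp (-(g (|X ((j:ℕ)+1) ω| / c ((j:ℕ)+1)) / 2))) ∈ S.H := by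
    intro k s
    have hDs : (0:ℝ) ≤ ∑ j : Fin k, C * (1 + ((c ((j:ℕ)+1))⁻¹) ^ m) * (c ((j:ℕ)+1))⁻¹ :=
      Finset.sum_nonneg fun j _ => (hDpos ((j:ℕ)+1) (by omega)).le
    refine S.comp_mem k (fun j => X ((j:ℕ)+1)) (fun j => hX _)
      (fun x => s * ∏ j : Fin k, Real.exp (-(g (|x j| / c ((j:ℕ)+1)) / 2))) ?_
    refine ⟨|s| * (∑ j : Fin k, C * (1 + ((c ((j:ℕ)+1))⁻¹) ^ m) * (c ((j:ℕ)+1))⁻¹) + 1,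
      by nlinarith [abs_nonneg s, mul_nonneg (abs_nonneg s) hDs], m, fun x y => ?_⟩
    have hp := prod_lip k (fun j z => Real.exp (-(g (|z| / c ((j:ℕ)+1)) / 2)))
      (fun j z => hHbd _ _)
      (fun j => C * (1 + ((c ((j:ℕ)+1))⁻¹) ^ m) * (c ((j:ℕ)+1))⁻¹)
      (fun j => (hDpos ((j:ℕ)+1) (by omega)).le) m
      (fun j u v => hHlip ((j:ℕ)+1) (by omega) u v) x y
    have e0 : s * (∏ j : Fin k, Real.exp (-(g (|x j| / c ((j:ℕ)+1)) / 2))) -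
        s * (∏ j : Fin k, Real.exp (-(g (|y j| / c ((j:ℕ)+1)) / 2))) =
        s * ((∏ j : Fin k, Real.exp (-(g (|x j| / c ((j:ℕ)+1)) / 2))) -
          ∏ j : Fin k, Real.exp (-(g (|y j| / c ((j:ℕ)+1)) / 2))) := by ring
    rw [e0, abs_mul]
    have step := mul_le_mul_of_nonneg_left hp (abs_nonneg s)
    refine step.trans ?_
    have hR : (0:ℝ) ≤ 1 + ‖x‖ ^ m + ‖y‖ ^ m := by positivity
    have hN : (0:ℝ) ≤ ‖x - y‖ := norm_nonneg _
    nlinarith [mul_nonneg hR hN]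
  -- single-factor memberships
  have hnegh_mem : ∀ j : ℕ, 1 ≤ j →
      (fun ω => (-1 : ℝ) * Real.exp (-(g (|X j ω| / c j) / 2))) ∈ S.H := by
    intro j hj
    refine mem_comp1 S (hX j) (φ := fun x => (-1 : ℝ) * Real.exp (-(g (|x| / c j) / 2)))
      ⟨C * (1 + ((c j)⁻¹) ^ m) * (c j)⁻¹, hDpos j hj, m, fun x y => ?_⟩
    simp only [Real.norm_eq_abs]
    have e : (-1 : ℝ) * Real.exp (-(g (|x| / c j) / 2)) -
        (-1) * Real.exp (-(g (|y| / c j) / 2)) =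
        -(Real.exp (-(g (|x| / c j) / 2)) - Real.exp (-(g (|y| / c j) / 2))) := by ring
    rw [e, abs_neg]
    exact hHlip j hj x y
  have hgX_mem : ∀ i j : ℕ, 1 ≤ j → (fun ω => g (|X i ω| / c j)) ∈ S.H := by
    intro i j hj
    exact mem_comp1 S (hX i) ⟨C * (1 + ((c j)⁻¹) ^ m) * (c j)⁻¹, hDpos j hj, m,
      fun x y => by simp only [Real.norm_eq_abs]; exact hGlip j hj x y⟩
  have hgq_mem : ∀ j : ℕ, 1 ≤ j → (fun ω => g (|X j ω| / c j) / 4) ∈ S.H := by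
    intro j hj
    refine mem_comp1 S (hX j) (φ := fun x => g (|x| / c j) / 4)
      ⟨C * (1 + ((c j)⁻¹) ^ m) * (c j)⁻¹, hDpos j hj, m, fun x y => ?_⟩
    simp only [Real.norm_eq_abs]
    rw [div_sub_div_same, abs_div, show |(4:ℝ)| = 4 by norm_num]
    have h3 := hGlip j hj x y
    have h4 := abs_nonneg (g (|x| / c j) - g (|y| / c j))
    linarith
  have haff_mem : ∀ j : ℕ, 1 ≤ j → (fun ω => -1 + g (|X j ω| / c j) / 4) ∈ S.H := by
    intro j hj
    refine mem_comp1 S (hX j) (φ := fun x => -1 + g (|x| / c j) / 4)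
      ⟨C * (1 + ((c j)⁻¹) ^ m) * (c j)⁻¹, hDpos j hj, m, fun x y => ?_⟩
    simp only [Real.norm_eq_abs]
    have e : (-1 + g (|x| / c j) / 4) - (-1 + g (|y| / c j) / 4) =
        (g (|x| / c j) - g (|y| / c j)) / 4 := by ring
    rw [e, abs_div, show |(4:ℝ)| = 4 by norm_num]
    have h3 := hGlip j hj x y
    have h4 := abs_nonneg (g (|x| / c j) - g (|y| / c j))
    linarith
  -- bounds for E g
  have hEg_bd : ∀ j : ℕ, 1 ≤ j → 0 ≤ S.E (fun ω => g (|X 1 ω| / c j)) ∧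
      S.E (fun ω => g (|X 1 ω| / c j)) ≤ 1 := by
    intro j hj
    exact ⟨const_le_E S (hgX_mem 1 j hj) (fun ω => hg0 _),
      E_le_const S (hgX_mem 1 j hj) (fun ω => hg1 _)⟩
  -- the key one-factor estimate
  have ha_le : ∀ j : ℕ, 1 ≤ j →
      -S.E (fun ω => (-1 : ℝ) * Real.exp (-(g (|X j ω| / c j) / 2)))
        ≤ 1 - S.E (fun ω => g (|X 1 ω| / c j)) / 4 := by
    intro j hj
    have hpw : ∀ ω, -1 + g (|X j ω| / c j) / 4 ≤
        (-1 : ℝ) * Real.exp (-(g (|X j ω| / c j) / 2)) := by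
      intro ω
      have := exp_neg_half_le (hg0 (|X j ω| / c j)) (hg1 (|X j ω| / c j))
      linarith
    have hmono := S.mono _ (hnegh_mem j hj) _ (haff_mem j hj) hpw
    have e1 : S.E (fun ω => -1 + g (|X j ω| / c j) / 4) =
        -1 + S.E (fun ω => g (|X j ω| / c j) / 4) := E_shift S (hgq_mem j hj) (-1)
    have e2 : S.E (fun ω => g (|X j ω| / c j) / 4) =
        (1/4) * S.E (fun ω => g (|X j ω| / c j)) := by
      have e : (fun ω => g (|X j ω| / c j) / 4) =
          fun ω => (1/4) * g (|X j ω| / c j) := by funext ω; ring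
      rw [e]
      exact S.homog (1/4) (by norm_num) _ (hgX_mem j j hj)
    have e3 : S.E (fun ω => g (|X j ω| / c j)) = S.E (fun ω => g (|X 1 ω| / c j)) :=
      hid j hj (fun x => g (|x| / c j)) ⟨C * (1 + ((c j)⁻¹) ^ m) * (c j)⁻¹, hDpos j hj, m,
        fun x y => by simp only [Real.norm_eq_abs]; exact hGlip j hj x y⟩
    rw [e1, e2, e3] at hmono
    linarith
  have ha_nonneg : ∀ j : ℕ, 1 ≤ j →
      0 ≤ -S.E (fun ω => (-1 : ℝ) * Real.exp (-(g (|X j ω| / c j) / 2))) := by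
    intro j hj
    have hpw : ∀ ω, (-1 : ℝ) * Real.exp (-(g (|X j ω| / c j) / 2)) ≤ 0 := fun ω => by
      nlinarith [Real.exp_pos (-(g (|X j ω| / c j) / 2))]
    have := E_le_const S (hnegh_mem j hj) (c := 0) hpw
    linarith
  -- main induction
  have hmain : ∀ (k : ℕ) (hk : 1 ≤ k),
      -S.E (fun ω => (-1:ℝ) *
          ∏ j : Fin k, Real.exp (-(g (|X ((j:ℕ)+1) ω| / c ((j:ℕ)+1)) / 2)))
        ≤ ∏ j : Fin k, (1 - S.E (fun ω => g (|X 1 ω| / c ((j:ℕ)+1))) / 4) := by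
    intro k hk
    induction k, hk using Nat.le_induction with
    | base =>
      have e : (fun ω => (-1:ℝ) *
          ∏ j : Fin 1, Real.exp (-(g (|X ((j:ℕ)+1) ω| / c ((j:ℕ)+1)) / 2))) =
          fun ω => (-1:ℝ) * Real.exp (-(g (|X 1 ω| / c 1) / 2)) := by
        funext ω; rw [Fin.prod_univ_one]; norm_num
      rw [e, Fin.prod_univ_one]
      simpa using ha_le 1 le_rfl
    | succ k hk ih =>
      have hBk : (0:ℝ) ≤ ∏ j : Fin k, (1 - S.E (fun ω => g (|X 1 ω| / c ((j:ℕ)+1))) / 4) :=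
        Finset.prod_nonneg fun j _ => by
          have := (hEg_bd ((j:ℕ)+1) (by omega)).2; linarith
      have hφlip : LocLip (fun q : (Fin k → ℝ) × ℝ => (-1:ℝ) *
          ((∏ j : Fin k, Real.exp (-(g (|q.1 j| / c ((j:ℕ)+1)) / 2))) *
            Real.exp (-(g (|q.2| / c (k+1)) / 2)))) :=
        prod_pair_lip (fun j z => Real.exp (-(g (|z| / c ((j:ℕ)+1)) / 2)))
          (fun z => Real.exp (-(g (|z| / c (k+1)) / 2)))
          (fun j z => hHbd _ _) (fun z => hHbd _ _)
          (fun j => C * (1 + ((c ((j:ℕ)+1))⁻¹) ^ m) * (c ((j:ℕ)+1))⁻¹)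
          (fun j => (hDpos ((j:ℕ)+1) (by omega)).le)
          (C * (1 + ((c (k+1))⁻¹) ^ m) * (c (k+1))⁻¹) (hDpos (k+1) (by omega)) m
          (fun j u v => hHlip ((j:ℕ)+1) (by omega) u v)
          (fun u v => hHlip (k+1) (by omega) u v)
      have hIab := hindep k hk
        (fun x y => (-1:ℝ) * ((∏ j : Fin k, Real.exp (-(g (|x j| / c ((j:ℕ)+1)) / 2))) *
          Real.exp (-(g (|y| / c (k+1)) / 2)))) hφlip
      have eL : (fun ω => (-1:ℝ) *
          ((∏ j : Fin k, Real.exp (-(g (|X ((j:ℕ)+1) ω| / c ((j:ℕ)+1)) / 2))) *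
            Real.exp (-(g (|X (k+1) ω| / c (k+1)) / 2)))) =
          fun ω => (-1:ℝ) *
            ∏ j : Fin (k+1), Real.exp (-(g (|X ((j:ℕ)+1) ω| / c ((j:ℕ)+1)) / 2)) := by
        funext ω
        rw [Fin.prod_univ_castSucc]
        simp
      have hinner : ∀ ω, S.E (fun ω' => (-1:ℝ) *
          ((∏ j : Fin k, Real.exp (-(g (|X ((j:ℕ)+1) ω| / c ((j:ℕ)+1)) / 2))) *
            Real.exp (-(g (|X (k+1) ω'| / c (k+1)) / 2)))) =
          (-(-S.E (fun ω' => (-1:ℝ) * Real.exp (-(g (|X (k+1) ω'| / c (k+1)) / 2))))) *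
            (∏ j : Fin k, Real.exp (-(g (|X ((j:ℕ)+1) ω| / c ((j:ℕ)+1)) / 2))) := by
        intro ω
        have e : (fun ω' => (-1:ℝ) *
            ((∏ j : Fin k, Real.exp (-(g (|X ((j:ℕ)+1) ω| / c ((j:ℕ)+1)) / 2))) *
              Real.exp (-(g (|X (k+1) ω'| / c (k+1)) / 2)))) =
            fun ω' => (∏ j : Fin k, Real.exp (-(g (|X ((j:ℕ)+1) ω| / c ((j:ℕ)+1)) / 2))) *
              ((-1:ℝ) * Real.exp (-(g (|X (k+1) ω'| / c (k+1)) / 2))) := by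
          funext ω'; ring
        rw [e, S.homog _ (Finset.prod_nonneg fun j _ => (hHpos _ _).le) _
          (hnegh_mem (k+1) (by omega))]
        ring
      have eO : (fun ω => S.E (fun ω' => (-1:ℝ) *
          ((∏ j : Fin k, Real.exp (-(g (|X ((j:ℕ)+1) ω| / c ((j:ℕ)+1)) / 2))) *
            Real.exp (-(g (|X (k+1) ω'| / c (k+1)) / 2))))) =
          fun ω => (-S.E (fun ω' => (-1:ℝ) * Real.exp (-(g (|X (k+1) ω'| / c (k+1)) / 2)))) *
            ((-1:ℝ) * ∏ j : Fin k, Real.exp (-(g (|X ((j:ℕ)+1) ω| / c ((j:ℕ)+1)) / 2))) := by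
        funext ω
        rw [hinner ω]
        ring
      have hA0 : 0 ≤ -S.E (fun ω' => (-1:ℝ) * Real.exp (-(g (|X (k+1) ω'| / c (k+1)) / 2))) :=
        ha_nonneg (k+1) (by omega)
      have hE2 : S.E (fun ω =>
          (-S.E (fun ω' => (-1:ℝ) * Real.exp (-(g (|X (k+1) ω'| / c (k+1)) / 2)))) *
            ((-1:ℝ) * ∏ j : Fin k, Real.exp (-(g (|X ((j:ℕ)+1) ω| / c ((j:ℕ)+1)) / 2)))) =
          (-S.E (fun ω' => (-1:ℝ) * Real.exp (-(g (|X (k+1) ω'| / c (k+1)) / 2)))) *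
            S.E (fun ω => (-1:ℝ) *
              ∏ j : Fin k, Real.exp (-(g (|X ((j:ℕ)+1) ω| / c ((j:ℕ)+1)) / 2))) :=
        S.homog _ hA0 _ (hPmem k (-1))
      have htot : S.E (fun ω => (-1:ℝ) *
          ∏ j : Fin (k+1), Real.exp (-(g (|X ((j:ℕ)+1) ω| / c ((j:ℕ)+1)) / 2))) =
          (-S.E (fun ω' => (-1:ℝ) * Real.exp (-(g (|X (k+1) ω'| / c (k+1)) / 2)))) *
            S.E (fun ω => (-1:ℝ) *
              ∏ j : Fin k, Real.exp (-(g (|X ((j:ℕ)+1) ω| / c ((j:ℕ)+1)) / 2))) := by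
        rw [← eL]
        rw [hIab]
        rw [eO] at *
        exact hE2
      have step1 : -S.E (fun ω => (-1:ℝ) *
          ∏ j : Fin (k+1), Real.exp (-(g (|X ((j:ℕ)+1) ω| / c ((j:ℕ)+1)) / 2))) =
          (-S.E (fun ω' => (-1:ℝ) * Real.exp (-(g (|X (k+1) ω'| / c (k+1)) / 2)))) *
            (-S.E (fun ω => (-1:ℝ) *
              ∏ j : Fin k, Real.exp (-(g (|X ((j:ℕ)+1) ω| / c ((j:ℕ)+1)) / 2)))) := by
        rw [htot]; ring
      rw [step1]
      have step2 := mul_le_mul_of_nonneg_left ih hA0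
      refine step2.trans ?_
      have step3 := mul_le_mul_of_nonneg_right (ha_le (k+1) (by omega)) hBk
      refine step3.trans (le_of_eq ?_)
      rw [Fin.prod_univ_castSucc]
      simp [mul_comm]
  -- pointwise indicator bound
  have hptw : ∀ ω, ({ω' | ∑ j ∈ Finset.Icc 1 n, g (|X j ω'| / c j) < l}.indicator
      (fun _ => (1:ℝ)) ω) ≤
      Real.exp (l/2) * ∏ j : Fin n, Real.exp (-(g (|X ((j:ℕ)+1) ω| / c ((j:ℕ)+1)) / 2)) := by
    intro ω
    have hprodeq : ∏ j : Fin n, Real.exp (-(g (|X ((j:ℕ)+1) ω| / c ((j:ℕ)+1)) / 2)) =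
        Real.exp (-((∑ j ∈ Finset.Icc 1 n, g (|X j ω| / c j)) / 2)) := by
      rw [← Real.exp_sum]
      congr 1
      rw [sumIcc (fun j => g (|X j ω| / c j)) n]
      rw [Finset.sum_neg_distrib, ← Finset.sum_div]
    by_cases hmem : ω ∈ {ω' | ∑ j ∈ Finset.Icc 1 n, g (|X j ω'| / c j) < l}
    · rw [Set.indicator_of_mem hmem]
      have hS : ∑ j ∈ Finset.Icc 1 n, g (|X j ω| / c j) < l := hmem
      rw [hprodeq, ← Real.exp_add]
      refine Real.one_le_exp ?_
      linarith
    · rw [Set.indicator_of_notMem hmem]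
      have := Real.exp_pos (l/2)
      have hQ : (0:ℝ) < ∏ j : Fin n, Real.exp (-(g (|X ((j:ℕ)+1) ω| / c ((j:ℕ)+1)) / 2)) :=
        Finset.prod_pos fun j _ => hHpos _ _
      positivity
  -- memberships for the final monotonicity step
  have hneg_ind_mem : (fun ω => -({ω' | ∑ j ∈ Finset.Icc 1 n,
      g (|X j ω'| / c j) < l}.indicator (fun _ => (1:ℝ)) ω)) ∈ S.H := by
    refine mem_comp1 S (hind _) ⟨1, one_pos, 0, fun x y => ?_⟩
    simp only [Real.norm_eq_abs, pow_zero]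
    rw [show -x - -y = -(x - y) by ring, abs_neg]
    nlinarith [abs_nonneg (x - y)]
  have hsc_mem : (fun ω => Real.exp (l/2) * ((-1:ℝ) *
      ∏ j : Fin n, Real.exp (-(g (|X ((j:ℕ)+1) ω| / c ((j:ℕ)+1)) / 2)))) ∈ S.H := by
    have e : (fun ω => Real.exp (l/2) * ((-1:ℝ) *
        ∏ j : Fin n, Real.exp (-(g (|X ((j:ℕ)+1) ω| / c ((j:ℕ)+1)) / 2)))) =
        fun ω => (-(Real.exp (l/2))) *
          ∏ j : Fin n, Real.exp (-(g (|X ((j:ℕ)+1) ω| / c ((j:ℕ)+1)) / 2)) := by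
      funext ω; ring
    rw [e]
    exact hPmem n (-(Real.exp (l/2)))
  have hpw2 : ∀ ω, Real.exp (l/2) * ((-1:ℝ) *
      ∏ j : Fin n, Real.exp (-(g (|X ((j:ℕ)+1) ω| / c ((j:ℕ)+1)) / 2))) ≤
      -({ω' | ∑ j ∈ Finset.Icc 1 n, g (|X j ω'| / c j) < l}.indicator
        (fun _ => (1:ℝ)) ω) := by
    intro ω
    have := hptw ω
    linarith
  have hmono2 := S.mono _ hneg_ind_mem _ hsc_mem hpw2
  have hEsc : S.E (fun ω => Real.exp (l/2) * ((-1:ℝ) *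
      ∏ j : Fin n, Real.exp (-(g (|X ((j:ℕ)+1) ω| / c ((j:ℕ)+1)) / 2)))) =
      Real.exp (l/2) * S.E (fun ω => (-1:ℝ) *
        ∏ j : Fin n, Real.exp (-(g (|X ((j:ℕ)+1) ω| / c ((j:ℕ)+1)) / 2))) :=
    S.homog _ (Real.exp_nonneg _) _ (hPmem n (-1))
  -- final product bound
  have hBle : (∏ j : Fin n, (1 - S.E (fun ω => g (|X 1 ω| / c ((j:ℕ)+1))) / 4)) ≤
      Real.exp (-(1/4) * ∑ j ∈ Finset.Icc 1 n, S.E (fun ω => g (|X 1 ω| / c j))) := by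
    calc ∏ j : Fin n, (1 - S.E (fun ω => g (|X 1 ω| / c ((j:ℕ)+1))) / 4)
        ≤ ∏ j : Fin n, Real.exp (-(S.E (fun ω => g (|X 1 ω| / c ((j:ℕ)+1))) / 4)) := by
          refine Finset.prod_le_prod (fun j _ => ?_) (fun j _ => ?_)
          · have := (hEg_bd ((j:ℕ)+1) (by omega)).2; linarith
          · have := Real.add_one_le_exp (-(S.E (fun ω => g (|X 1 ω| / c ((j:ℕ)+1))) / 4))
            linarith
      _ = Real.exp (∑ j : Fin n, -(S.E (fun ω => g (|X 1 ω| / c ((j:ℕ)+1))) / 4)) :=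
          (Real.exp_sum _ _).symm
      _ = Real.exp (-(1/4) * ∑ j ∈ Finset.Icc 1 n, S.E (fun ω => g (|X 1 ω| / c j))) := by
          congr 1
          rw [sumIcc (fun j => S.E (fun ω => g (|X 1 ω| / c j))) n, Finset.mul_sum]
          exact Finset.sum_congr rfl fun j _ => by ring
  -- conclude
  have hfin1 : -S.E (fun ω => -({ω' | ∑ j ∈ Finset.Icc 1 n,
      g (|X j ω'| / c j) < l}.indicator (fun _ => (1:ℝ)) ω)) ≤
      Real.exp (l/2) * (-S.E (fun ω => (-1:ℝ) *
        ∏ j : Fin n, Real.exp (-(g (|X ((j:ℕ)+1) ω| / c ((j:ℕ)+1)) / 2)))) := by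
    rw [hEsc] at hmono2
    nlinarith [hmono2]
  refine hfin1.trans ?_
  have h2 := mul_le_mul_of_nonneg_left (hmain n hn) (Real.exp_nonneg (l/2))
  refine h2.trans ?_
  exact mul_le_mul_of_nonneg_left hBle (Real.exp_nonneg (l/2))



/-- Exponential lower-capacity estimate: for an IID sequence, a `C_{l,Lip}` function `g`
with `1{x ≥ 1} ≤ g(x) ≤ 1{x > 1/2}`, `M > 0`, `p ≥ 1`, and `v(A) = −Ê(−1_A)`,
`v(Σ_{j=1}^n g(|X_j|/(Mj)^{1/p}) < l) ≤ e^{l/2} exp(−(1/4) Σ_{j=1}^n Ê[g(|X₁|/(Mj)^{1/p})])`. -/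
theorem exp_lower_capacity_estimate {Ω : Type*} (S : SubLinExp Ω) (X : ℕ → Ω → ℝ)
    (hX : ∀ i, X i ∈ S.H)
    (hind : ∀ A : Set Ω, (A.indicator fun _ => (1 : ℝ)) ∈ S.H)
    (hindep : IndepSeq1 S X) (hid : IdentDist1 S X)
    (g : ℝ → ℝ) (hg0 : ∀ x, 0 ≤ g x) (hgL : LocLip g)
    (hg : ∀ x : ℝ, (if 1 ≤ x then (1 : ℝ) else 0) ≤ g x ∧
      g x ≤ (if 1 / 2 < x then (1 : ℝ) else 0))
    (M : ℝ) (hM : 0 < M) (p : ℝ) (hp : 1 ≤ p)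
    (n : ℕ) (hn : 1 ≤ n) (l : ℝ) (hl : 1 ≤ l) :
    -S.E (fun ω => -({ω' | ∑ j ∈ Finset.Icc 1 n,
          g (|X j ω'| / (M * (j : ℝ)) ^ (1 / p)) < l}.indicator (fun _ => (1 : ℝ)) ω))
      ≤ Real.exp (l / 2) * Real.exp (-(1 / 4) *
          ∑ j ∈ Finset.Icc 1 n, S.E (fun ω => g (|X 1 ω| / (M * (j : ℝ)) ^ (1 / p)))) := by
  have hg1 : ∀ x, g x ≤ 1 := fun x => le_trans (hg x).2 (by split <;> norm_num)
  have hc : ∀ j : ℕ, 1 ≤ j → 0 < (M * (j : ℝ)) ^ (1 / p) := by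
    intro j hj
    apply Real.rpow_pos_of_pos
    have h1 : (1:ℝ) ≤ (j:ℝ) := by exact_mod_cast hj
    nlinarith
  exact main_aux S X hX hind hindep hid g hg0 hg1 hgL
    (fun j => (M * (j : ℝ)) ^ (1 / p)) hc n hn l
end
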